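/- arXiv:1102.2454 — 6 statements merged into one kernel-verified Lean document; each statement's English description precedes it below -/
import Mathlib

section
/- Let X be a metric space and let (ξ_k)_{k≥1} and (ζ_k)_{k≥1} be sequences in X whose ranges are dense in X and such that for every isolated point x of X the sets {k : ξ_k = x} and {k : ζ_k = x} have the same cardinality. Then for every ε > 0 there exists a permutation π of the positive integers such that dist(ξ_k, ζ_{π(k)}) < ε for all k ≥ 1 and dist(ξ_k, ζ_{π(k)}) → 0 as k → ∞. -/
open Filter Set Metric Topology

namespace Stmt0Aux

variable {X : Type*} [MetricSpace X]

/-- isolatedness predicate -/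
def Iso (x : X) : Prop := IsOpen ({x} : Set X)

/-- tolerance sequence -/
noncomputable def u (ε : ℝ) (m : ℕ) : ℝ := ε / (8 * 2 ^ m)

lemma u_pos {ε : ℝ} (hε : 0 < ε) (m : ℕ) : 0 < u ε m := by
  unfold u; positivity

lemma u_anti {ε : ℝ} (hε : 0 < ε) {m n : ℕ} (h : m ≤ n) : u ε n ≤ u ε m := by
  unfold u
  apply div_le_div_of_nonneg_left hε.le (by positivity)
  have : (2:ℝ) ^ m ≤ 2 ^ n := by
    apply pow_le_pow_right₀ (by norm_num) h
  linarith

lemma u_le {ε : ℝ} (hε : 0 < ε) (m : ℕ) : u ε m ≤ ε / 8 := by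
  have := u_anti hε (Nat.zero_le m)
  simpa [u] using this

lemma u_lt_eps {ε : ℝ} (hε : 0 < ε) (m : ℕ) : u ε m < ε := by
  have := u_le hε m; linarith

lemma u_tendsto {ε : ℝ} (hε : 0 < ε) : Tendsto (u ε) atTop (𝓝 0) := by
  have h : (u ε) = fun m => (ε / 8) * (1/2 : ℝ) ^ m := by
    funext m
    simp only [u]
    rw [div_pow, one_pow, mul_one_div, div_div]
  rw [h]
  simpa using (tendsto_pow_atTop_nhds_zero_of_lt_one (by norm_num : (0:ℝ) ≤ 1/2)
    (by norm_num : (1/2:ℝ) < 1)).const_mul (ε / 8)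

/-- Key analytic fact: near a non-isolated point there are infinitely many indices of a
dense sequence, so we can always find an unused one. -/
lemma exists_partner {ζ : ℕ → X} (hζ : DenseRange ζ) {x : X} (hx : ¬ Iso x)
    {δ : ℝ} (hδ : 0 < δ) {F : Set ℕ} (hF : F.Finite) :
    ∃ j, j ∉ F ∧ dist x (ζ j) < δ := by
  have hne : (𝓝[≠] x).NeBot := by
    rw [neBot_iff]
    intro h
    exact hx ((isOpen_singleton_iff_punctured_nhds x).2 h)
  have hball : (ball x δ).Infinite := infinite_of_mem_nhds x (ball_mem_nhds x hδ)
  have hidx : {j : ℕ | ζ j ∈ ball x δ}.Infinite := by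
    by_contra hfin
    rw [Set.not_infinite] at hfin
    have himg : (ζ '' {j : ℕ | ζ j ∈ ball x δ}).Finite := hfin.image ζ
    obtain ⟨j, hj⟩ := hζ.exists_mem_open (isOpen_ball.sdiff himg.isClosed)
      ((hball.diff himg).nonempty)
    exact hj.2 ⟨j, hj.1, rfl⟩
  obtain ⟨j, hj⟩ := (hidx.diff hF).nonempty
  exact ⟨j, hj.2, by rw [dist_comm]; exact mem_ball.1 hj.1⟩


section Core

variable (ξ ζ : ℕ → X) (ε : ℝ)

/-- value of the "requester" of step `n` (even steps: `ξ`-side, odd: `ζ`-side) -/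
def Reqg (n : ℕ) (q : ℕ × ℕ) : X := if n % 2 = 0 then ξ q.1 else ζ q.2

/-- value of the "partner" of step `n` -/
def Parg (n : ℕ) (q : ℕ × ℕ) : X := if n % 2 = 0 then ζ q.2 else ξ q.1

/-- certificate for the pair created at step `n` given history `g` (read only below `n`):
either an exact match, a match of a non-isolated requester within tolerance `u ε n`,
or a "deficit" match: the requester is isolated, its partner fiber is exhausted,
and an earlier non-exact pair touching the requester value provides a non-isolated
point `h` nearby, near which the new partner is chosen. -/
def Certg (g : ℕ → ℕ × ℕ) (n : ℕ) (q : ℕ × ℕ) : Prop :=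
  ξ q.1 = ζ q.2
  ∨ (dist (ξ q.1) (ζ q.2) < u ε n ∧ ¬ Iso (Reqg ξ ζ n q))
  ∨ (Iso (Reqg ξ ζ n q)
     ∧ (if n % 2 = 0 then ∀ j, ζ j = ξ q.1 → ∃ m, m < n ∧ (g m).2 = j
        else ∀ k, ξ k = ζ q.2 → ∃ m, m < n ∧ (g m).1 = k)
     ∧ ∃ m, m < n ∧ ξ (g m).1 ≠ ζ (g m).2
         ∧ (ξ (g m).1 = Reqg ξ ζ n q ∨ ζ (g m).2 = Reqg ξ ζ n q)
         ∧ ∃ h : X, ¬ Iso h ∧ dist (Reqg ξ ζ n q) h < u ε m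
             ∧ dist (ξ q.1) (ζ q.2) < u ε m + u ε n
             ∧ dist (Parg ξ ζ n q) h < u ε n)

/-- full requirement on the pair created at step `n`. -/
def Entryg (g : ℕ → ℕ × ℕ) (n : ℕ) (q : ℕ × ℕ) : Prop :=
  (∀ m, m < n → (g m).1 ≠ q.1 ∧ (g m).2 ≠ q.2)
  ∧ (if n % 2 = 0 then ∀ k, k < q.1 → ∃ m, m < n ∧ (g m).1 = k
     else ∀ j, j < q.2 → ∃ m, m < n ∧ (g m).2 = j)
  ∧ Certg ξ ζ ε g n q

lemma Certg_mono {g₁ g₂ : ℕ → ℕ × ℕ} {n : ℕ} {q : ℕ × ℕ}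
    (hg : ∀ m, m < n → g₁ m = g₂ m) (h : Certg ξ ζ ε g₁ n q) : Certg ξ ζ ε g₂ n q := by
  unfold Certg at h ⊢
  rcases h with h | h | ⟨h1, h2, m, hm, h3, h4, h5⟩
  · exact Or.inl h
  · exact Or.inr (Or.inl h)
  · refine Or.inr (Or.inr ⟨h1, ?_, m, hm, ?_, ?_, ?_⟩)
    · split_ifs at h2 ⊢
      · intro j hj; obtain ⟨m', hm', e⟩ := h2 j hj; exact ⟨m', hm', by rw [← hg m' hm']; exact e⟩
      · intro k hk; obtain ⟨m', hm', e⟩ := h2 k hk; exact ⟨m', hm', by rw [← hg m' hm']; exact e⟩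
    · rw [← hg m hm]; exact h3
    · rw [← hg m hm]; exact h4
    · exact h5

lemma Entryg_mono {g₁ g₂ : ℕ → ℕ × ℕ} {n : ℕ} {q : ℕ × ℕ}
    (hg : ∀ m, m < n → g₁ m = g₂ m) (h : Entryg ξ ζ ε g₁ n q) : Entryg ξ ζ ε g₂ n q := by
  obtain ⟨h1, h2, h3⟩ := h
  refine ⟨fun m hm => by rw [← hg m hm]; exact h1 m hm, ?_, Certg_mono ξ ζ ε hg h3⟩
  split_ifs at h2 ⊢
  · intro k hk; obtain ⟨m', hm', e⟩ := h2 k hk; exact ⟨m', hm', by rw [← hg m' hm']; exact e⟩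
  · intro j hj; obtain ⟨m', hm', e⟩ := h2 j hj; exact ⟨m', hm', by rw [← hg m' hm']; exact e⟩

end Core

/-- the counting argument at an isolated point with exhausted fiber: some earlier pair
touching the fiber must be non-exact. -/
lemma counting {α β : ℕ → X} {x : X}
    (hcard : Cardinal.mk {k : ℕ | α k = x} = Cardinal.mk {j : ℕ | β j = x})
    {a b : ℕ → ℕ} {n : ℕ}
    (hcover : ∀ j, β j = x → ∃ m, m < n ∧ b m = j)
    (hainj : ∀ m, m < n → ∀ m', m' < n → m ≠ m' → a m ≠ a m')
    (hexact : ∀ m, m < n → β (b m) = x → α (a m) = x)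
    {k₀ : ℕ} (hk₀x : α k₀ = x) (hk₀ : ∀ m, m < n → a m ≠ k₀) : False := by
  classical
  set Zf := {j : ℕ | β j = x} with hZf
  set Xf := {k : ℕ | α k = x} with hXf
  have hZfin : Zf.Finite := by
    apply Set.Finite.subset ((Set.finite_Iio n).image b)
    intro j hj
    obtain ⟨m, hm, e⟩ := hcover j hj
    exact ⟨m, hm, e⟩
  have hXfin : Xf.Finite := by
    rw [← Cardinal.lt_aleph0_iff_set_finite] at hZfin ⊢
    rwa [hcard]
  set φ : ℕ → ℕ := fun j => if h : β j = x then a (Classical.choose (hcover j h)) else 0 with hφ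
  have hmem : ∀ j ∈ Zf, φ j ∈ Xf \ {k₀} := by
    intro j hj
    have hj' : β j = x := hj
    obtain ⟨hm, he⟩ := Classical.choose_spec (hcover j hj')
    simp only [hφ, dif_pos hj']
    refine ⟨hexact _ hm (by rw [he]; exact hj'), ?_⟩
    simp only [mem_singleton_iff]
    exact hk₀ _ hm
  have hinj : Set.InjOn φ Zf := by
    intro j hj j' hj' he
    have h1 : β j = x := hj
    have h2 : β j' = x := hj'
    obtain ⟨hm1, he1⟩ := Classical.choose_spec (hcover j h1)
    obtain ⟨hm2, he2⟩ := Classical.choose_spec (hcover j' h2)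
    simp only [hφ, dif_pos h1, dif_pos h2] at he
    by_contra hne
    have hmm : Classical.choose (hcover j h1) ≠ Classical.choose (hcover j' h2) := by
      intro hcc
      rw [hcc] at he1
      rw [he1] at he2
      exact hne he2
    exact hainj _ hm1 _ hm2 hmm he
  have hle : Zf.ncard ≤ (Xf \ {k₀}).ncard :=
    Set.ncard_le_ncard_of_injOn φ hmem hinj (hXfin.subset diff_subset)
  have hlt : (Xf \ {k₀}).ncard < Xf.ncard :=
    Set.ncard_diff_singleton_lt_of_mem hk₀x hXfin
  have heq : Xf.ncard = Zf.ncard := by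
    obtain ⟨e⟩ := Cardinal.eq.1 hcard
    rw [← Nat.card_coe_set_eq, ← Nat.card_coe_set_eq]
    exact Nat.card_congr e
  omega

/-- At every step a suitable new pair exists. -/
lemma exists_entry {ξ ζ : ℕ → X} (hξ : DenseRange ξ) (hζ : DenseRange ζ)
    (hiso : ∀ x : X, IsOpen ({x} : Set X) →
      Cardinal.mk {k : ℕ | ξ k = x} = Cardinal.mk {k : ℕ | ζ k = x})
    {ε : ℝ} (hε : 0 < ε) (g : ℕ → ℕ × ℕ) (n : ℕ)
    (hg : ∀ m, m < n → Entryg ξ ζ ε g m (g m)) :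
    ∃ q, Entryg ξ ζ ε g n q := by
  classical
  have hAfin : {k : ℕ | ∃ m, m < n ∧ (g m).1 = k}.Finite := by
    apply Set.Finite.subset ((Set.finite_Iio n).image fun m => (g m).1)
    rintro k ⟨m, hm, e⟩
    exact ⟨m, hm, e⟩
  have hBfin : {j : ℕ | ∃ m, m < n ∧ (g m).2 = j}.Finite := by
    apply Set.Finite.subset ((Set.finite_Iio n).image fun m => (g m).2)
    rintro k ⟨m, hm, e⟩
    exact ⟨m, hm, e⟩
  have hAinj : ∀ m, m < n → ∀ m', m' < n → m ≠ m' → (g m).1 ≠ (g m').1 := by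
    intro m hm m' hm' hne
    rcases lt_or_gt_of_ne hne with h | h
    · exact fun e => ((hg m' hm').1 m h).1 e
    · exact fun e => ((hg m hm).1 m' h).1 e.symm
  have hBinj : ∀ m, m < n → ∀ m', m' < n → m ≠ m' → (g m).2 ≠ (g m').2 := by
    intro m hm m' hm' hne
    rcases lt_or_gt_of_ne hne with h | h
    · exact fun e => ((hg m' hm').1 m h).2 e
    · exact fun e => ((hg m hm).1 m' h).2 e.symm
  rcases Nat.even_or_odd n with hpar | hpar
  · -- EVEN step: requester on the ξ side
    have hn2 : n % 2 = 0 := Nat.even_iff.1 hpar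
    have hExk : ∃ k : ℕ, ¬ ∃ m, m < n ∧ (g m).1 = k := by
      obtain ⟨k, hk⟩ := hAfin.infinite_compl.nonempty
      exact ⟨k, hk⟩
    set k₀ := Nat.find hExk with hk₀def
    have hk₀ : ¬ ∃ m, m < n ∧ (g m).1 = k₀ := Nat.find_spec hExk
    have hleast : ∀ k, k < k₀ → ∃ m, m < n ∧ (g m).1 = k := fun k hk =>
      not_not.1 (Nat.find_min hExk hk)
    by_cases hexact : ∃ j, ζ j = ξ k₀ ∧ ¬ ∃ m, m < n ∧ (g m).2 = j
    · obtain ⟨j, hjx, hjun⟩ := hexact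
      refine ⟨(k₀, j), fun m hm => ⟨fun e => hk₀ ⟨m, hm, e⟩, fun e => hjun ⟨m, hm, e⟩⟩,
        ?_, Or.inl hjx.symm⟩
      rw [if_pos hn2]
      exact fun k hk => hleast k hk
    · push_neg at hexact
      by_cases hisox : Iso (ξ k₀)
      · -- deficit case
        have hne : ∃ m', m' < n ∧ ζ (g m').2 = ξ k₀ ∧ ξ (g m').1 ≠ ζ (g m').2 := by
          by_contra hcon
          push_neg at hcon
          exact counting (hiso _ hisox) hexact hAinj
            (fun m hm hb => by rw [hcon m hm hb]; exact hb) rfl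
            (fun m hm e => hk₀ ⟨m, hm, e⟩)
        obtain ⟨m', hm', hbx, hnex⟩ := hne
        have hcert := (hg m' hm').2.2
        have hstep : ∃ mt, mt < n ∧ ξ (g mt).1 ≠ ζ (g mt).2
            ∧ (ξ (g mt).1 = ξ k₀ ∨ ζ (g mt).2 = ξ k₀)
            ∧ ∃ h : X, ¬ Iso h ∧ dist (ξ k₀) h < u ε mt := by
          rcases hcert with hc | hc | hc
          · exact absurd hc hnex
          · rcases Nat.even_or_odd m' with hp | hp
            · have hm2 : m' % 2 = 0 := Nat.even_iff.1 hp
              refine ⟨m', hm', hnex, Or.inr hbx, ξ (g m').1, ?_, ?_⟩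
              · have := hc.2
                rwa [Reqg, if_pos hm2] at this
              · rw [← hbx, dist_comm]
                exact hc.1
            · have hm2 : m' % 2 ≠ 0 := by rw [Nat.odd_iff] at hp; omega
              exfalso
              apply hc.2
              rw [Reqg, if_neg hm2, hbx]
              exact hisox
          · obtain ⟨hiso', hexh', mt, hmt, hne'', htouch'', h, hisoh, hdxh, hdpair, hparh⟩ := hc
            rcases Nat.even_or_odd m' with hp | hp
            · have hm2 : m' % 2 = 0 := Nat.even_iff.1 hp
              refine ⟨m', hm', hnex, Or.inr hbx, h, hisoh, ?_⟩
              have hpe : Parg ξ ζ m' (g m') = ξ k₀ := by rw [Parg, if_pos hm2, hbx]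
              rw [← hpe]
              exact hparh
            · have hm2 : m' % 2 ≠ 0 := by rw [Nat.odd_iff] at hp; omega
              have hreq : Reqg ξ ζ m' (g m') = ξ k₀ := by rw [Reqg, if_neg hm2, hbx]
              rw [hreq] at hdxh htouch''
              exact ⟨mt, lt_trans hmt hm', hne'', htouch'', h, hisoh, hdxh⟩
        obtain ⟨mt, hmt, hne2, htouch, h, hisoh, hdxh⟩ := hstep
        obtain ⟨j, hjF, hjd⟩ := exists_partner hζ hisoh (u_pos hε n) hBfin
        refine ⟨(k₀, j), fun m hm => ⟨fun e => hk₀ ⟨m, hm, e⟩, fun e => hjF ⟨m, hm, e⟩⟩,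
          ?_, ?_⟩
        · rw [if_pos hn2]
          exact fun k hk => hleast k hk
        · have hrq : Reqg ξ ζ n (k₀, j) = ξ k₀ := by rw [Reqg, if_pos hn2]
          refine Or.inr (Or.inr ⟨?_, ?_, mt, hmt, hne2, ?_, h, hisoh, ?_, ?_, ?_⟩)
          · rw [hrq]; exact hisox
          · rw [if_pos hn2]; exact hexact
          · rw [hrq]; exact htouch
          · rw [hrq]; exact hdxh
          · calc dist (ξ k₀) (ζ j) ≤ dist (ξ k₀) h + dist h (ζ j) := dist_triangle _ _ _
            _ < u ε mt + u ε n := add_lt_add hdxh hjd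
          · rw [Parg, if_pos hn2, dist_comm]
            exact hjd
      · -- heavy case
        obtain ⟨j, hjF, hjd⟩ := exists_partner hζ hisox (u_pos hε n) hBfin
        refine ⟨(k₀, j), fun m hm => ⟨fun e => hk₀ ⟨m, hm, e⟩, fun e => hjF ⟨m, hm, e⟩⟩,
          ?_, Or.inr (Or.inl ⟨hjd, ?_⟩)⟩
        · rw [if_pos hn2]
          exact fun k hk => hleast k hk
        · rw [Reqg, if_pos hn2]
          exact hisox
  · -- ODD step: requester on the ζ side
    have hn2 : n % 2 ≠ 0 := by rw [Nat.odd_iff] at hpar; omega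
    have hExj : ∃ j : ℕ, ¬ ∃ m, m < n ∧ (g m).2 = j := by
      obtain ⟨j, hj⟩ := hBfin.infinite_compl.nonempty
      exact ⟨j, hj⟩
    set j₀ := Nat.find hExj with hj₀def
    have hj₀ : ¬ ∃ m, m < n ∧ (g m).2 = j₀ := Nat.find_spec hExj
    have hleast : ∀ j, j < j₀ → ∃ m, m < n ∧ (g m).2 = j := fun j hj =>
      not_not.1 (Nat.find_min hExj hj)
    by_cases hexact : ∃ k, ξ k = ζ j₀ ∧ ¬ ∃ m, m < n ∧ (g m).1 = k
    · obtain ⟨k, hkx, hkun⟩ := hexact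
      refine ⟨(k, j₀), fun m hm => ⟨fun e => hkun ⟨m, hm, e⟩, fun e => hj₀ ⟨m, hm, e⟩⟩,
        ?_, Or.inl hkx⟩
      rw [if_neg hn2]
      exact fun j hj => hleast j hj
    · push_neg at hexact
      by_cases hisoy : Iso (ζ j₀)
      · -- deficit case
        have hne : ∃ m', m' < n ∧ ξ (g m').1 = ζ j₀ ∧ ξ (g m').1 ≠ ζ (g m').2 := by
          by_contra hcon
          push_neg at hcon
          refine counting (hiso _ hisoy).symm hexact hBinj ?_ rfl
            (fun m hm e => hj₀ ⟨m, hm, e⟩)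
          intro m hm ha
          rw [← hcon m hm ha]
          exact ha
        obtain ⟨m', hm', hax, hnex⟩ := hne
        have hcert := (hg m' hm').2.2
        have hstep : ∃ mt, mt < n ∧ ξ (g mt).1 ≠ ζ (g mt).2
            ∧ (ξ (g mt).1 = ζ j₀ ∨ ζ (g mt).2 = ζ j₀)
            ∧ ∃ h : X, ¬ Iso h ∧ dist (ζ j₀) h < u ε mt := by
          rcases hcert with hc | hc | hc
          · exact absurd hc hnex
          · rcases Nat.even_or_odd m' with hp | hp
            · have hm2 : m' % 2 = 0 := Nat.even_iff.1 hp
              exfalso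
              apply hc.2
              rw [Reqg, if_pos hm2, hax]
              exact hisoy
            · have hm2 : m' % 2 ≠ 0 := by rw [Nat.odd_iff] at hp; omega
              refine ⟨m', hm', hnex, Or.inl hax, ζ (g m').2, ?_, ?_⟩
              · have := hc.2
                rwa [Reqg, if_neg hm2] at this
              · rw [← hax]
                exact hc.1
          · obtain ⟨hiso', hexh', mt, hmt, hne'', htouch'', h, hisoh, hdxh, hdpair, hparh⟩ := hc
            rcases Nat.even_or_odd m' with hp | hp
            · have hm2 : m' % 2 = 0 := Nat.even_iff.1 hp
              have hreq : Reqg ξ ζ m' (g m') = ζ j₀ := by rw [Reqg, if_pos hm2, hax]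
              rw [hreq] at hdxh htouch''
              exact ⟨mt, lt_trans hmt hm', hne'', htouch'', h, hisoh, hdxh⟩
            · have hm2 : m' % 2 ≠ 0 := by rw [Nat.odd_iff] at hp; omega
              refine ⟨m', hm', hnex, Or.inl hax, h, hisoh, ?_⟩
              have hpe : Parg ξ ζ m' (g m') = ζ j₀ := by rw [Parg, if_neg hm2, hax]
              rw [← hpe]
              exact hparh
        obtain ⟨mt, hmt, hne2, htouch, h, hisoh, hdxh⟩ := hstep
        obtain ⟨k, hkF, hkd⟩ := exists_partner hξ hisoh (u_pos hε n) hAfin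
        refine ⟨(k, j₀), fun m hm => ⟨fun e => hkF ⟨m, hm, e⟩, fun e => hj₀ ⟨m, hm, e⟩⟩,
          ?_, ?_⟩
        · rw [if_neg hn2]
          exact fun j hj => hleast j hj
        · have hrq : Reqg ξ ζ n (k, j₀) = ζ j₀ := by rw [Reqg, if_neg hn2]
          refine Or.inr (Or.inr ⟨?_, ?_, mt, hmt, hne2, ?_, h, hisoh, ?_, ?_, ?_⟩)
          · rw [hrq]; exact hisoy
          · rw [if_neg hn2]; exact hexact
          · rw [hrq]; exact htouch
          · rw [hrq]; exact hdxh
          · calc dist (ξ k) (ζ j₀) = dist (ζ j₀) (ξ k) := dist_comm _ _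
            _ ≤ dist (ζ j₀) h + dist h (ξ k) := dist_triangle _ _ _
            _ < u ε mt + u ε n := add_lt_add hdxh hkd
          · rw [Parg, if_neg hn2, dist_comm]
            exact hkd
      · -- heavy case
        obtain ⟨k, hkF, hkd⟩ := exists_partner hξ hisoy (u_pos hε n) hAfin
        refine ⟨(k, j₀), fun m hm => ⟨fun e => hkF ⟨m, hm, e⟩, fun e => hj₀ ⟨m, hm, e⟩⟩,
          ?_, Or.inr (Or.inl ⟨by rw [dist_comm]; exact hkd, ?_⟩)⟩
        · rw [if_neg hn2]
          exact fun j hj => hleast j hj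
        · rw [Reqg, if_neg hn2]
          exact hisoy

/-- the recursive construction: at stage `n` we have a function whose values below `n`
are the pairs constructed so far, each satisfying its entry requirement. -/
noncomputable def run {X : Type*} [MetricSpace X] (ξ ζ : ℕ → X) (hξ : DenseRange ξ)
    (hζ : DenseRange ζ)
    (hiso : ∀ x : X, IsOpen ({x} : Set X) →
      Cardinal.mk {k : ℕ | ξ k = x} = Cardinal.mk {k : ℕ | ζ k = x})
    (ε : ℝ) (hε : 0 < ε) :
    (n : ℕ) → {g : ℕ → ℕ × ℕ // ∀ m, m < n → Entryg ξ ζ ε g m (g m)} :=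
  Nat.rec ⟨fun _ => (0, 0), fun m hm => absurd hm (Nat.not_lt_zero m)⟩
    (fun n prev =>
      ⟨Function.update prev.1 n (Classical.choose (exists_entry hξ hζ hiso hε prev.1 n prev.2)),
        by
          set q := Classical.choose (exists_entry hξ hζ hiso hε prev.1 n prev.2) with hqdef
          have hq : Entryg ξ ζ ε prev.1 n q :=
            Classical.choose_spec (exists_entry hξ hζ hiso hε prev.1 n prev.2)
          intro m hm
          have hupd : ∀ i, i < n → Function.update prev.1 n q i = prev.1 i := fun i hi =>
            Function.update_of_ne (Nat.ne_of_lt hi) _ _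
          rcases Nat.lt_succ_iff_lt_or_eq.1 hm with h | h
          · have h2 := Entryg_mono ξ ζ ε (fun i hi => (hupd i (lt_trans hi h)).symm) (prev.2 m h)
            rw [show Function.update prev.1 n q m = prev.1 m from hupd m h]
            exact h2
          · subst h
            have h2 := Entryg_mono ξ ζ ε (fun i hi => (hupd i hi).symm) hq
            rw [Function.update_self]
            exact h2⟩)

lemma exists_run {X : Type*} [MetricSpace X] {ξ ζ : ℕ → X} (hξ : DenseRange ξ)
    (hζ : DenseRange ζ)
    (hiso : ∀ x : X, IsOpen ({x} : Set X) →
      Cardinal.mk {k : ℕ | ξ k = x} = Cardinal.mk {k : ℕ | ζ k = x})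
    {ε : ℝ} (hε : 0 < ε) :
    ∃ p : ℕ → ℕ × ℕ, ∀ n, Entryg ξ ζ ε p n (p n) := by
  set R := run ξ ζ hξ hζ hiso ε hε with hR
  have hstep : ∀ N : ℕ, (R (N + 1)).1 =
      Function.update (R N).1 N
        (Classical.choose (exists_entry hξ hζ hiso hε (R N).1 N (R N).2)) := fun N => rfl
  have hRcoh : ∀ N n, n < N → (R N).1 n = (R (n + 1)).1 n := by
    intro N
    induction N with
    | zero => intro n hn; omega
    | succ N ih =>
      intro n hn
      rcases Nat.lt_succ_iff_lt_or_eq.1 hn with h | h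
      · rw [hstep N, Function.update_of_ne (Nat.ne_of_lt h)]
        exact ih n h
      · subst h; rfl
  refine ⟨fun n => (R (n + 1)).1 n, fun n => ?_⟩
  have h1 := (R (n + 1)).2 n (Nat.lt_succ_self n)
  exact Entryg_mono ξ ζ ε (fun i hi => hRcoh (n + 1) i (by omega)) h1

end Stmt0Aux

/-- Let `X` be a metric space and `ξ`, `ζ` sequences in `X` with dense
range such that every isolated point of `X` (a point whose singleton is open) is hit by `ξ`
and by `ζ` the same number of times (same cardinality of fibers).  Then for every `ε > 0`
there is a permutation `π` of the indices with `dist (ξ k) (ζ (π k)) < ε` for all `k`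
and `dist (ξ k) (ζ (π k)) → 0`. -/
theorem stmt0 {X : Type*} [MetricSpace X] (ξ ζ : ℕ → X)
    (hξ : DenseRange ξ) (hζ : DenseRange ζ)
    (hiso : ∀ x : X, IsOpen ({x} : Set X) →
      Cardinal.mk {k : ℕ | ξ k = x} = Cardinal.mk {k : ℕ | ζ k = x}) :
    ∀ ε : ℝ, 0 < ε → ∃ π : Equiv.Perm ℕ,
      (∀ k : ℕ, dist (ξ k) (ζ (π k)) < ε) ∧
      Filter.Tendsto (fun k : ℕ => dist (ξ k) (ζ (π k))) Filter.atTop (nhds 0) := by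
  intro ε hε
  classical
  obtain ⟨p, hp⟩ := Stmt0Aux.exists_run hξ hζ hiso hε
  -- injectivity of the two coordinate sequences
  have hAinj : Function.Injective (fun n => (p n).1) := by
    intro m n hmn
    by_contra hne
    rcases lt_or_gt_of_ne hne with h | h
    · exact ((hp n).1 m h).1 hmn
    · exact ((hp m).1 n h).1 hmn.symm
  have hBinj : Function.Injective (fun n => (p n).2) := by
    intro m n hmn
    by_contra hne
    rcases lt_or_gt_of_ne hne with h | h
    · exact ((hp n).1 m h).2 hmn
    · exact ((hp m).1 n h).2 hmn.symm
  -- the "least unmatched" clauses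
  have hAleast : ∀ i : ℕ, ∀ k < (p (2 * i)).1, ∃ m, m < 2 * i ∧ (p m).1 = k := by
    intro i
    have h := (hp (2 * i)).2.1
    rwa [if_pos (by omega : 2 * i % 2 = 0)] at h
  have hBleast : ∀ i : ℕ, ∀ j < (p (2 * i + 1)).2, ∃ m, m < 2 * i + 1 ∧ (p m).2 = j := by
    intro i
    have h := (hp (2 * i + 1)).2.1
    rwa [if_neg (by omega : ¬ (2 * i + 1) % 2 = 0)] at h
  -- surjectivity
  have hAmono : StrictMono fun i => (p (2 * i)).1 := by
    apply strictMono_nat_of_lt_succ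
    intro i
    rcases lt_trichotomy ((p (2 * i)).1) ((p (2 * (i + 1))).1) with h | h | h
    · exact h
    · exact absurd (hAinj h) (by omega)
    · exfalso
      obtain ⟨m, hm, he⟩ := hAleast i _ h
      have : m = 2 * (i + 1) := hAinj he
      omega
  have hBmono : StrictMono fun i => (p (2 * i + 1)).2 := by
    apply strictMono_nat_of_lt_succ
    intro i
    rcases lt_trichotomy ((p (2 * i + 1)).2) ((p (2 * (i + 1) + 1)).2) with h | h | h
    · exact h
    · exact absurd (hBinj h) (by omega)
    · exfalso
      obtain ⟨m, hm, he⟩ := hBleast i _ h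
      have : m = 2 * (i + 1) + 1 := hBinj he
      omega
  have hAsurj : Function.Surjective (fun n => (p n).1) := by
    intro k
    have hk : k < (p (2 * (k + 1))).1 :=
      lt_of_lt_of_le (Nat.lt_succ_self k) hAmono.le_apply
    obtain ⟨m, _, he⟩ := hAleast (k + 1) k hk
    exact ⟨m, he⟩
  have hBsurj : Function.Surjective (fun n => (p n).2) := by
    intro j
    have hj : j < (p (2 * (j + 1) + 1)).2 :=
      lt_of_lt_of_le (Nat.lt_succ_self j) hBmono.le_apply
    obtain ⟨m, _, he⟩ := hBleast (j + 1) j hj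
    exact ⟨m, he⟩
  -- the per-step distance bound
  have hDlt : ∀ n, dist (ξ (p n).1) (ζ (p n).2) < ε := by
    intro n
    rcases (hp n).2.2 with hc | hc | hc
    · rw [hc, dist_self]; exact hε
    · exact lt_trans hc.1 (Stmt0Aux.u_lt_eps hε n)
    · obtain ⟨-, -, mt, hmt, -, -, h, -, -, hdp, -⟩ := hc
      have h1 := Stmt0Aux.u_le hε mt
      have h2 := Stmt0Aux.u_le hε n
      linarith
  -- finiteness of the set of deficit steps at a fixed requester value
  have hkey : ∀ y : X,
      {n : ℕ | (Stmt0Aux.Iso (Stmt0Aux.Reqg ξ ζ n (p n))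
        ∧ (if n % 2 = 0 then ∀ j, ζ j = ξ (p n).1 → ∃ m, m < n ∧ (p m).2 = j
            else ∀ k, ξ k = ζ (p n).2 → ∃ m, m < n ∧ (p m).1 = k))
        ∧ Stmt0Aux.Reqg ξ ζ n (p n) = y}.Finite := by
    intro y
    rcases Set.eq_empty_or_nonempty {n : ℕ | (Stmt0Aux.Iso (Stmt0Aux.Reqg ξ ζ n (p n))
        ∧ (if n % 2 = 0 then ∀ j, ζ j = ξ (p n).1 → ∃ m, m < n ∧ (p m).2 = j
            else ∀ k, ξ k = ζ (p n).2 → ∃ m, m < n ∧ (p m).1 = k))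
        ∧ Stmt0Aux.Reqg ξ ζ n (p n) = y} with he | hne
    · rw [he]; exact Set.finite_empty
    · obtain ⟨n₀, ⟨hisoy', hexh⟩, hrq⟩ := hne
      rw [hrq] at hisoy'
      have hzx : {j : ℕ | ζ j = y}.Finite ∧ {k : ℕ | ξ k = y}.Finite := by
        by_cases hpar : n₀ % 2 = 0
        · rw [if_pos hpar] at hexh
          have hreq : Stmt0Aux.Reqg ξ ζ n₀ (p n₀) = ξ (p n₀).1 := by
            rw [Stmt0Aux.Reqg, if_pos hpar]
          rw [hreq] at hrq
          have hz : {j : ℕ | ζ j = y}.Finite := by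
            apply Set.Finite.subset ((Set.finite_Iio n₀).image fun m => (p m).2)
            rintro j hj
            obtain ⟨m, hm, e⟩ := hexh j (by rw [hrq]; exact hj)
            exact ⟨m, hm, e⟩
          refine ⟨hz, ?_⟩
          rw [← Cardinal.lt_aleph0_iff_set_finite] at hz ⊢
          rwa [hiso y hisoy']
        · rw [if_neg hpar] at hexh
          have hreq : Stmt0Aux.Reqg ξ ζ n₀ (p n₀) = ζ (p n₀).2 := by
            rw [Stmt0Aux.Reqg, if_neg hpar]
          rw [hreq] at hrq
          have hx : {k : ℕ | ξ k = y}.Finite := by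
            apply Set.Finite.subset ((Set.finite_Iio n₀).image fun m => (p m).1)
            rintro k hk
            obtain ⟨m, hm, e⟩ := hexh k (by rw [hrq]; exact hk)
            exact ⟨m, hm, e⟩
          refine ⟨?_, hx⟩
          rw [← Cardinal.lt_aleph0_iff_set_finite] at hx ⊢
          rwa [hiso y hisoy'] at hx
      apply Set.Finite.subset (Set.Finite.union
        (hzx.2.preimage (Set.injOn_of_injective hAinj))
        (hzx.1.preimage (Set.injOn_of_injective hBinj)))
      intro n hn
      obtain ⟨⟨hi, hx⟩, hr⟩ := hn
      by_cases hpar : n % 2 = 0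
      · left
        have hreq : Stmt0Aux.Reqg ξ ζ n (p n) = ξ (p n).1 := by
          rw [Stmt0Aux.Reqg, if_pos hpar]
        rw [hreq] at hr
        exact hr
      · right
        have hreq : Stmt0Aux.Reqg ξ ζ n (p n) = ζ (p n).2 := by
          rw [Stmt0Aux.Reqg, if_neg hpar]
        rw [hreq] at hr
        exact hr
  -- finiteness of the steps with distance at least η
  have hfin : ∀ η : ℝ, 0 < η →
      {n : ℕ | η ≤ dist (ξ (p n).1) (ζ (p n).2)}.Finite := by
    intro η hη
    obtain ⟨N, hN⟩ : ∃ N : ℕ, ∀ n, N ≤ n → Stmt0Aux.u ε n < η / 2 := by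
      have h := (Stmt0Aux.u_tendsto hε).eventually_lt_const (half_pos hη)
      rw [Filter.eventually_atTop] at h
      exact h
    apply Set.Finite.subset (Set.Finite.union (Set.finite_Iio N)
      ((Set.finite_Iio N).biUnion fun m _ =>
        Set.Finite.union (hkey (ξ (p m).1)) (hkey (ζ (p m).2))))
    intro n hn
    by_cases hnN : n < N
    · exact Or.inl hnN
    · right
      push_neg at hnN
      have hn' : η ≤ dist (ξ (p n).1) (ζ (p n).2) := hn
      rcases (hp n).2.2 with hc | hc | hc
      · exfalso
        rw [hc, dist_self] at hn'
        linarith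
      · exfalso
        have := hN n hnN
        have := hc.1
        linarith
      · obtain ⟨hiso', hexh', mt, hmt, hne'', htouch, h, hisoh, hdxh, hdp, hparh⟩ := hc
        have hmtN : mt < N := by
          by_contra hcon
          push_neg at hcon
          have h1 := hN mt hcon
          have h2 := hN n hnN
          linarith
        refine Set.mem_biUnion hmtN ?_
        rcases htouch with ht | ht
        · exact Or.inl ⟨⟨hiso', hexh'⟩, ht.symm⟩
        · exact Or.inr ⟨⟨hiso', hexh'⟩, ht.symm⟩
  -- assemble the permutation
  let eA : ℕ ≃ ℕ := Equiv.ofBijective _ ⟨hAinj, hAsurj⟩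
  let eB : ℕ ≃ ℕ := Equiv.ofBijective _ ⟨hBinj, hBsurj⟩
  have hπd : ∀ k, dist (ξ k) (ζ ((eA.symm.trans eB) k)) =
      dist (ξ (p (eA.symm k)).1) (ζ (p (eA.symm k)).2) := by
    intro k
    have hk : (p (eA.symm k)).1 = k := eA.apply_symm_apply k
    calc dist (ξ k) (ζ ((eA.symm.trans eB) k))
        = dist (ξ (p (eA.symm k)).1) (ζ ((eA.symm.trans eB) k)) := by rw [hk]
      _ = dist (ξ (p (eA.symm k)).1) (ζ (p (eA.symm k)).2) := rfl
  refine ⟨eA.symm.trans eB, fun k => ?_, ?_⟩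
  · rw [hπd k]
    exact hDlt _
  · rw [← Nat.cofinite_eq_atTop, Metric.tendsto_nhds]
    intro η hη
    rw [Filter.eventually_cofinite]
    apply Set.Finite.subset ((hfin η hη).preimage
      (Set.injOn_of_injective eA.symm.injective))
    intro k hk
    simp only [Set.mem_setOf_eq] at hk ⊢
    rw [Real.dist_0_eq_abs, abs_of_nonneg dist_nonneg, hπd k] at hk
    exact not_lt.1 hk
end

section
/- Let H₁ and H₂ be complex Hilbert spaces, and let Q₁ and Q₂ be closed densely defined linear operators on H₁ and H₂ respectively. Equip Hᵢ × Hᵢ with the Hilbert norm ‖(v,w)‖ = (‖v‖² + ‖w‖²)^{1/2}, and for (v,w) ∈ Hᵢ × Hᵢ let Γ_{Qᵢ}(v,w) denote the distance from (v,w) to the graph {(u, Qᵢu) : u ∈ D(Qᵢ)}. Let U : H₁ → H₂ be a unitary operator (a surjective linear isometry). Then Γ_{Q₂}(Uv, Uw) = Γ_{Q₁}(v, w) for all v, w ∈ H₁ if and only if U(D(Q₁)) = D(Q₂) and U(Q₁v) = Q₂(Uv) for every v ∈ D(Q₁). -/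
open scoped InnerProductSpace

/-- The distance from the pair `(v, w)` to the graph of the (partially defined) operator `Q`,
where `H × H` carries the Hilbert norm `‖(v,w)‖ = (‖v‖² + ‖w‖²)^(1/2)`. -/
noncomputable def graphDist {H : Type*} [NormedAddCommGroup H] [InnerProductSpace ℂ H]
    (Q : H →ₗ.[ℂ] H) (v w : H) : ℝ :=
  sInf (Set.range fun u : Q.domain =>
    Real.sqrt (‖v - (u : H)‖ ^ 2 + ‖w - Q u‖ ^ 2))

section helpers
variable {H : Type*} [NormedAddCommGroup H] [InnerProductSpace ℂ H]

lemma gd_nonneg (Q : H →ₗ.[ℂ] H) (v w : H) : 0 ≤ graphDist Q v w :=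
  Real.sInf_nonneg (by rintro x ⟨u, rfl⟩; exact Real.sqrt_nonneg _)

lemma gd_bddBelow (Q : H →ₗ.[ℂ] H) (v w : H) :
    BddBelow (Set.range fun u : Q.domain =>
      Real.sqrt (‖v - (u : H)‖ ^ 2 + ‖w - Q u‖ ^ 2)) :=
  ⟨0, by rintro x ⟨u, rfl⟩; exact Real.sqrt_nonneg _⟩

lemma gd_self (Q : H →ₗ.[ℂ] H) (u : Q.domain) : graphDist Q u (Q u) = 0 := by
  apply le_antisymm _ (gd_nonneg Q _ _)
  have : Real.sqrt (‖(u : H) - (u : H)‖ ^ 2 + ‖Q u - Q u‖ ^ 2) = 0 := by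
    simp
  calc graphDist Q u (Q u) ≤ _ := csInf_le (gd_bddBelow Q _ _) ⟨u, rfl⟩
  _ = 0 := this

lemma gd_eq_zero_iff (Q : H →ₗ.[ℂ] H) (hc : Q.IsClosed) (v w : H) :
    graphDist Q v w = 0 ↔ (v, w) ∈ Q.graph := by
  constructor
  · intro h
    have hne : (Set.range fun u : Q.domain =>
        Real.sqrt (‖v - (u : H)‖ ^ 2 + ‖w - Q u‖ ^ 2)).Nonempty := ⟨_, ⟨0, rfl⟩⟩
    have hcl : (v, w) ∈ closure (Q.graph : Set (H × H)) := by
      rw [Metric.mem_closure_iff]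
      intro ε hε
      have h0 : sInf (Set.range fun u : Q.domain =>
          Real.sqrt (‖v - (u : H)‖ ^ 2 + ‖w - Q u‖ ^ 2)) ≤ 0 := le_of_eq h
      rw [Real.sInf_le_iff (gd_bddBelow Q v w) hne] at h0
      obtain ⟨x, ⟨u, rfl⟩, hx⟩ := h0 ε hε
      rw [zero_add] at hx
      refine ⟨(u, Q u), Q.mem_graph u, ?_⟩
      rw [Prod.dist_eq]
      have h1 : ‖v - (u : H)‖ ≤ Real.sqrt (‖v - (u : H)‖ ^ 2 + ‖w - Q u‖ ^ 2) := by
        have := Real.sqrt_le_sqrt (le_add_of_nonneg_right (sq_nonneg ‖w - Q u‖) :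
          ‖v - (u : H)‖ ^ 2 ≤ ‖v - (u : H)‖ ^ 2 + ‖w - Q u‖ ^ 2)
        rwa [Real.sqrt_sq (norm_nonneg _)] at this
      have h2 : ‖w - Q u‖ ≤ Real.sqrt (‖v - (u : H)‖ ^ 2 + ‖w - Q u‖ ^ 2) := by
        have := Real.sqrt_le_sqrt (le_add_of_nonneg_left (sq_nonneg ‖v - (u : H)‖) :
          ‖w - Q u‖ ^ 2 ≤ ‖v - (u : H)‖ ^ 2 + ‖w - Q u‖ ^ 2)
        rwa [Real.sqrt_sq (norm_nonneg _)] at this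
      simp only [dist_eq_norm]
      exact max_lt (lt_of_le_of_lt h1 hx) (lt_of_le_of_lt h2 hx)
    rwa [hc.closure_eq] at hcl
  · intro h
    rw [LinearPMap.mem_graph_iff] at h
    obtain ⟨u, hu1, hu2⟩ := h
    have : graphDist Q v w ≤ 0 := by
      refine csInf_le (gd_bddBelow Q v w) ⟨u, ?_⟩
      simp [hu1, hu2]
    exact le_antisymm this (gd_nonneg Q v w)

end helpers

/-- Let `Q₁`, `Q₂` be closed densely defined operators on complex Hilbert
spaces `H₁`, `H₂` and `U : H₁ → H₂` a unitary operator.  Then `U` preserves the graph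
distance functions `Γ_{Q₁}`, `Γ_{Q₂}` if and only if `U` maps the domain of `Q₁` onto the
domain of `Q₂` and intertwines `Q₁` and `Q₂`. -/
theorem stmt1 {H₁ H₂ : Type*}
    [NormedAddCommGroup H₁] [InnerProductSpace ℂ H₁] [CompleteSpace H₁]
    [NormedAddCommGroup H₂] [InnerProductSpace ℂ H₂] [CompleteSpace H₂]
    (Q₁ : H₁ →ₗ.[ℂ] H₁) (Q₂ : H₂ →ₗ.[ℂ] H₂)
    (hQ₁dense : Dense (Q₁.domain : Set H₁)) (hQ₂dense : Dense (Q₂.domain : Set H₂))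
    (hQ₁closed : Q₁.IsClosed) (hQ₂closed : Q₂.IsClosed)
    (U : H₁ ≃ₗᵢ[ℂ] H₂) :
    (∀ v w : H₁, graphDist Q₂ (U v) (U w) = graphDist Q₁ v w) ↔
      (U '' (Q₁.domain : Set H₁) = (Q₂.domain : Set H₂) ∧
        ∀ (v : H₁) (hv : v ∈ Q₁.domain) (hv' : U v ∈ Q₂.domain),
          U (Q₁ ⟨v, hv⟩) = Q₂ ⟨U v, hv'⟩) := by
  constructor
  · intro h
    have key : ∀ (v : H₁) (hv : v ∈ Q₁.domain),
        (U v, U (Q₁ ⟨v, hv⟩)) ∈ Q₂.graph := by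
      intro v hv
      rw [← gd_eq_zero_iff Q₂ hQ₂closed, h]
      exact gd_self Q₁ ⟨v, hv⟩
    have key2 : ∀ w ∈ Q₂.domain, U.symm w ∈ Q₁.domain := by
      intro w hw
      have h0 : graphDist Q₁ (U.symm w) (U.symm (Q₂ ⟨w, hw⟩)) = 0 := by
        rw [← h]
        simp only [LinearIsometryEquiv.apply_symm_apply]
        exact gd_self Q₂ ⟨w, hw⟩
      rw [gd_eq_zero_iff Q₁ hQ₁closed, LinearPMap.mem_graph_iff] at h0
      obtain ⟨u, hu1, _⟩ := h0
      have hu1' : (u : H₁) = U.symm w := hu1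
      rw [← hu1']; exact u.2
    refine ⟨?_, ?_⟩
    · ext w
      constructor
      · rintro ⟨v, hv, rfl⟩
        have h0 := key v hv
        rw [LinearPMap.mem_graph_iff] at h0
        obtain ⟨u, hu1, _⟩ := h0
        have hu1' : (u : H₂) = U v := hu1
        rw [← hu1']; exact u.2
      · intro hw
        exact ⟨U.symm w, key2 w hw, by simp⟩
    · intro v hv hv'
      have h0 := key v hv
      rw [LinearPMap.mem_graph_iff] at h0
      obtain ⟨u, hu1, hu2⟩ := h0
      have hu1' : (u : H₂) = U v := hu1
      have hu2' : (Q₂ u : H₂) = U (Q₁ ⟨v, hv⟩) := hu2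
      rw [← hu2']
      congr 1
      exact Subtype.ext hu1'
  · rintro ⟨hdom, hint⟩ v w
    unfold graphDist
    congr 1
    apply Set.eq_of_subset_of_subset
    · rintro x ⟨u, rfl⟩
      have hmem : (u : H₂) ∈ U '' (Q₁.domain : Set H₁) := by rw [hdom]; exact u.2
      obtain ⟨a, ha, hau⟩ := hmem
      have hv' : U a ∈ Q₂.domain := by rw [hau]; exact u.2
      refine ⟨⟨a, ha⟩, ?_⟩
      have hQu : (Q₂ u : H₂) = U (Q₁ ⟨a, ha⟩) := by
        rw [hint a ha hv']
        congr 1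
        exact Subtype.ext hau.symm
      dsimp only
      rw [hQu, ← hau, ← map_sub, ← map_sub, U.norm_map, U.norm_map]
    · rintro x ⟨u, rfl⟩
      have hv' : U u ∈ Q₂.domain := by
        have : U (u : H₁) ∈ (Q₂.domain : Set H₂) := by
          rw [← hdom]; exact ⟨(u : H₁), u.2, rfl⟩
        exact this
      refine ⟨⟨U u, hv'⟩, ?_⟩
      have hQu : (Q₂ ⟨U u, hv'⟩ : H₂) = U (Q₁ u) := by
        have := hint u u.2 hv'
        rw [← this]
      dsimp only
      rw [hQu, ← map_sub, ← map_sub, U.norm_map, U.norm_map]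
end

section
/- Let μ and ν be finite Borel measures on ℝ. Then the following are equivalent: (a) there exists a linear isometry U : L²(ℝ, μ) → L²(ℝ, ν) such that U(g·f) = g·(Uf) for every bounded Borel function g : ℝ → ℂ and every f ∈ L²(ℝ, μ); (b) μ is absolutely continuous with respect to ν. -/
open MeasureTheory ENNReal

set_option linter.unusedSectionVars false
namespace Stmt3Aux

variable {μ ν : Measure ℝ} [IsFiniteMeasure μ] [IsFiniteMeasure ν]

/-- Multiplier function: square root of the Radon–Nikodym derivative. -/
noncomputable def w (μ ν : Measure ℝ) : ℝ → ℂ :=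
  fun x => (Real.sqrt ((μ.rnDeriv ν x).toReal) : ℂ)

lemma w_meas (μ ν : Measure ℝ) : Measurable (w μ ν) :=
  Complex.measurable_ofReal.comp
    ((μ.measurable_rnDeriv ν).ennreal_toReal.sqrt)

/-- Multiplication by `w` maps `μ`-a.e. equal functions to `ν`-a.e. equal functions. -/
lemma mul_ae (hac : μ ≪ ν) {φ ψ : ℝ → ℂ} (h : φ =ᵐ[μ] ψ) :
    (fun x => w μ ν x * φ x) =ᵐ[ν] fun x => w μ ν x * ψ x := by
  have hμ : ν.withDensity (μ.rnDeriv ν) = μ := Measure.withDensity_rnDeriv_eq μ ν hac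
  rw [← hμ] at h
  rw [Filter.EventuallyEq, ae_withDensity_iff (μ.measurable_rnDeriv ν)] at h
  filter_upwards [h] with x hx
  by_cases h0 : μ.rnDeriv ν x = 0
  · simp [w, h0]
  · simp [hx h0]

lemma lint_eq (hac : μ ≪ ν) {φ : ℝ → ℂ}
    (hφ : AEStronglyMeasurable φ μ) :
    ∫⁻ x, (‖w μ ν x * φ x‖₊ : ℝ≥0∞) ^ (2 : ℝ) ∂ν
      = ∫⁻ x, (‖φ x‖₊ : ℝ≥0∞) ^ (2 : ℝ) ∂μ := by
  have hμ : ν.withDensity (μ.rnDeriv ν) = μ := Measure.withDensity_rnDeriv_eq μ ν hac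
  have hg : AEMeasurable (fun x => (‖φ x‖₊ : ℝ≥0∞) ^ (2 : ℝ)) μ := by
    simp_rw [ENNReal.rpow_two]
    exact hφ.enorm.pow_const 2
  have hrhs : ∫⁻ x, (‖φ x‖₊ : ℝ≥0∞) ^ (2 : ℝ) ∂μ
      = ∫⁻ x, μ.rnDeriv ν x * (‖φ x‖₊ : ℝ≥0∞) ^ (2 : ℝ) ∂ν := by
    conv_lhs => rw [← hμ]
    exact lintegral_withDensity_eq_lintegral_mul₀' (μ.measurable_rnDeriv ν).aemeasurable
      (hμ.symm ▸ hg)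
  rw [hrhs]
  apply lintegral_congr_ae
  filter_upwards [Measure.rnDeriv_lt_top μ ν] with x hx
  have hsq : ((‖w μ ν x‖₊ : ℝ≥0∞)) ^ (2 : ℝ) = μ.rnDeriv ν x := by
    have hnorm : ‖w μ ν x‖ = Real.sqrt ((μ.rnDeriv ν x).toReal) := by
      simp [w, Real.sqrt_nonneg, abs_of_nonneg]
    rw [← enorm_eq_nnnorm, ← ofReal_norm, hnorm,
      ENNReal.ofReal_rpow_of_nonneg (Real.sqrt_nonneg _) (by norm_num),
      Real.rpow_two, Real.sq_sqrt ENNReal.toReal_nonneg,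
      ENNReal.ofReal_toReal hx.ne]
  calc ((‖w μ ν x * φ x‖₊ : ℝ≥0∞)) ^ (2 : ℝ)
      = ((‖w μ ν x‖₊ : ℝ≥0∞) * (‖φ x‖₊ : ℝ≥0∞)) ^ (2 : ℝ) := by
        rw [nnnorm_mul]; push_cast; ring_nf
    _ = ((‖w μ ν x‖₊ : ℝ≥0∞)) ^ (2 : ℝ) * ((‖φ x‖₊ : ℝ≥0∞)) ^ (2 : ℝ) :=
        ENNReal.mul_rpow_of_nonneg _ _ (by norm_num)
    _ = μ.rnDeriv ν x * (‖φ x‖₊ : ℝ≥0∞) ^ (2 : ℝ) := by rw [hsq]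

lemma eLpNorm_w_mul (hac : μ ≪ ν) {φ : ℝ → ℂ}
    (hφ : AEStronglyMeasurable φ μ) :
    eLpNorm (fun x => w μ ν x * φ x) 2 ν = eLpNorm φ 2 μ := by
  rw [eLpNorm_eq_lintegral_rpow_enorm_toReal (by norm_num) (by norm_num),
    eLpNorm_eq_lintegral_rpow_enorm_toReal (by norm_num) (by norm_num)]
  congr 1
  simpa [enorm_eq_nnnorm] using lint_eq hac hφ

lemma aesm_w_mul (hac : μ ≪ ν) {φ : ℝ → ℂ} (hφ : AEStronglyMeasurable φ μ) :
    AEStronglyMeasurable (fun x => w μ ν x * φ x) ν :=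
  ⟨fun x => w μ ν x * hφ.mk φ x,
    ((w_meas μ ν).mul hφ.stronglyMeasurable_mk.measurable).stronglyMeasurable,
    mul_ae hac hφ.ae_eq_mk⟩

lemma memℒp_w_mul (hac : μ ≪ ν) (f : Lp ℂ 2 μ) :
    MemLp (fun x => w μ ν x * (f : ℝ → ℂ) x) 2 ν :=
  ⟨aesm_w_mul hac (Lp.aestronglyMeasurable f), by
    rw [eLpNorm_w_mul hac (Lp.aestronglyMeasurable f)]
    exact Lp.eLpNorm_lt_top f⟩

/-- The isometry `f ↦ w ⬝ f` from `L²(μ)` to `L²(ν)`, when `μ ≪ ν`. -/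
noncomputable def Umap (hac : μ ≪ ν) :
    Lp ℂ 2 μ →ₗᵢ[ℂ] Lp ℂ 2 ν where
  toFun f := (memℒp_w_mul hac f).toLp _
  map_add' f g := by
    refine (MemLp.toLp_congr _ ((memℒp_w_mul hac f).add (memℒp_w_mul hac g)) ?_).trans
      (MemLp.toLp_add _ _)
    filter_upwards [mul_ae hac (Lp.coeFn_add f g)] with x hx
    simpa [mul_add] using hx
  map_smul' c f := by
    simp only [RingHom.id_apply]
    refine Eq.trans ?_ (MemLp.toLp_const_smul c (memℒp_w_mul hac f))
    refine MemLp.toLp_congr (memℒp_w_mul hac (c • f)) ((memℒp_w_mul hac f).const_smul c) ?_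
    filter_upwards [mul_ae hac (Lp.coeFn_smul c f)] with x hx
    simpa [smul_eq_mul, mul_comm, mul_left_comm] using hx
  norm_map' f := by
    show ‖(memℒp_w_mul hac f).toLp _‖ = ‖f‖
    rw [Lp.norm_toLp, eLpNorm_w_mul hac (Lp.aestronglyMeasurable f), Lp.norm_def]

lemma Umap_coe (hac : μ ≪ ν) (f : Lp ℂ 2 μ) :
    (Umap hac f : ℝ → ℂ) =ᵐ[ν] fun x => w μ ν x * (f : ℝ → ℂ) x :=
  MemLp.coeFn_toLp (memℒp_w_mul hac f)

end Stmt3Aux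

open Stmt3Aux

/-- For finite Borel measures `μ`, `ν` on `ℝ`, there exists a linear
isometry `U : L²(ℝ, μ) → L²(ℝ, ν)` commuting with multiplication by every bounded Borel
function if and only if `μ` is absolutely continuous with respect to `ν`. -/
theorem stmt3 (μ ν : Measure ℝ) [IsFiniteMeasure μ] [IsFiniteMeasure ν] :
    (∃ U : Lp ℂ 2 μ →ₗᵢ[ℂ] Lp ℂ 2 ν,
      ∀ g : ℝ → ℂ, Measurable g → (∃ C : ℝ, ∀ x, ‖g x‖ ≤ C) →
        ∀ f : Lp ℂ 2 μ,
          ∀ (h₁ : MemLp (fun x => g x * f x) 2 μ)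
            (h₂ : MemLp (fun x => g x * (U f : ℝ → ℂ) x) 2 ν),
            U (h₁.toLp _) = h₂.toLp _) ↔
      μ ≪ ν := by
  constructor
  · rintro ⟨U, hU⟩
    apply Measure.AbsolutelyContinuous.mk
    intro s hs hνs
    set f0 : MemLp (fun _ : ℝ => (1 : ℂ)) 2 μ := memLp_const 1 with hf0
    set f : Lp ℂ 2 μ := f0.toLp _ with hf
    set g : ℝ → ℂ := s.indicator fun _ => (1 : ℂ) with hg
    have hg_meas : Measurable g := measurable_const.indicator hs
    have hg_bdd : ∃ C : ℝ, ∀ x, ‖g x‖ ≤ C := by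
      refine ⟨1, fun x => ?_⟩
      by_cases hx : x ∈ s <;>
        simp [hg, Set.indicator_of_mem, Set.indicator_of_notMem, hx]
    have h₁ : MemLp (fun x => g x * (f : ℝ → ℂ) x) 2 μ := by
      refine (MemLp.indicator hs (memLp_const (1 : ℂ) : MemLp (fun _ : ℝ => (1 : ℂ)) 2 μ)).ae_eq ?_
      filter_upwards [f0.coeFn_toLp] with x hx
      rw [← hf] at hx
      rw [hx]; simp [hg]
    have hνs' : ∀ᵐ x ∂ν, x ∉ s := measure_eq_zero_iff_ae_notMem.mp hνs
    have hz : (fun x => g x * (U f : ℝ → ℂ) x) =ᵐ[ν] 0 := by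
      filter_upwards [hνs'] with x hx
      simp [hg, Set.indicator_of_notMem hx]
    have h₂ : MemLp (fun x => g x * (U f : ℝ → ℂ) x) 2 ν :=
      MemLp.zero.ae_eq hz.symm
    have key := hU g hg_meas hg_bdd f h₁ h₂
    have h₂0 : h₂.toLp _ = 0 := by
      apply Lp.ext
      filter_upwards [h₂.coeFn_toLp, Lp.coeFn_zero ℂ 2 ν, hz] with x hx1 hx2 hx3
      rw [hx1, hx2, hx3]
    rw [h₂0, ← map_zero U] at key
    have h10 : h₁.toLp _ = 0 := U.injective key
    have hae : (fun x => g x * (f : ℝ → ℂ) x) =ᵐ[μ] 0 := by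
      have := h₁.coeFn_toLp
      rw [h10] at this
      exact (this.symm.trans (Lp.coeFn_zero ℂ 2 μ))
    rw [measure_eq_zero_iff_ae_notMem]
    filter_upwards [hae, f0.coeFn_toLp] with x hx1 hx2 hx
    rw [← hf] at hx2
    rw [hx2, mul_one] at hx1
    rw [hg] at hx1
    simp [Set.indicator_of_mem hx] at hx1
  · intro hac
    refine ⟨Umap hac, fun g hgm hgb f h₁ h₂ => Lp.ext ?_⟩
    filter_upwards [Umap_coe hac (h₁.toLp _), mul_ae (ν := ν) hac h₁.coeFn_toLp,
      h₂.coeFn_toLp, Umap_coe hac f] with x e1 e2 e3 e4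
    rw [e1, e2, e3, e4]
    ring
end

section
/- Let H₁ and H₂ be separable complex Hilbert spaces with Hilbert bases (v_k)_{k≥1} and (w_k)_{k≥1} respectively, and let (ξ_k)_{k≥1} and (ζ_k)_{k≥1} be sequences of real numbers such that the closures of {ξ_k : k ≥ 1} and {ζ_k : k ≥ 1} in ℝ are equal to a common set X, and for every isolated point x of X the sets {k : ξ_k = x} and {k : ζ_k = x} have the same cardinality. Then for every ε > 0 there exist a permutation π of the positive integers and a unitary operator U : H₁ → H₂ such that U v_k = w_{π(k)} for all k ≥ 1, |ξ_k − ζ_{π(k)}| < ε for all k ≥ 1, and ξ_k − ζ_{π(k)} → 0 as k → ∞. -/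
open Metric Set Filter

namespace S13

/-- `x` is an isolated point of `X`. -/
def Isol (X : Set ℝ) (x : ℝ) : Prop := ∃ r > 0, X ∩ Metric.ball x r = {x}

/-- fiber of a sequence at a value -/
def Fib (a : ℕ → ℝ) (x : ℝ) : Set ℕ := {k | a k = x}

/-- rigid value: isolated with finite fiber -/
def Rig (a : ℕ → ℝ) (X : Set ℝ) (x : ℝ) : Prop := x ∈ X ∧ Isol X x ∧ (Fib a x).Finite

/-- thick point: all balls contain infinitely many indices -/
def Thk (a : ℕ → ℝ) (z : ℝ) : Prop := ∀ r > 0, {k | |a k - z| < r}.Infinite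

noncomputable def don (a : ℕ → ℝ) (x : ℝ) : ℕ := sInf (Fib a x)

/-- the pool: indices of non-rigid values plus donated copies of near-thick rigid values -/
def Pool (a : ℕ → ℝ) (X : Set ℝ) (NT : ℝ → Prop) : Set ℕ :=
  {k | ¬ Rig a X (a k) ∨ (NT (a k) ∧ k = don a (a k))}

section Basic

variable {a : ℕ → ℝ} {X : Set ℝ} {x z : ℝ}

lemma mem_X (h : closure (Set.range a) = X) (k : ℕ) : a k ∈ X := by
  rw [← h]; exact subset_closure ⟨k, rfl⟩

lemma approx (h : closure (Set.range a) = X) (hx : x ∈ X) {r : ℝ} (hr : 0 < r) :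
    ∃ j, |a j - x| < r := by
  rw [← h, Metric.mem_closure_iff] at hx
  obtain ⟨y, ⟨j, rfl⟩, hy⟩ := hx r hr
  exact ⟨j, by rwa [Real.dist_eq, abs_sub_comm] at hy⟩

lemma notIsol (hx : x ∈ X) (hni : ¬ Isol X x) {r : ℝ} (hr : 0 < r) :
    ∃ y ∈ X, y ≠ x ∧ |y - x| < r := by
  by_contra hc
  push_neg at hc
  exact hni ⟨r, hr, Set.eq_singleton_iff_unique_mem.2 ⟨⟨hx, by simpa using hr⟩,
    fun y ⟨hy1, hy2⟩ => by
      by_contra hne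
      exact absurd (by simpa [Real.dist_eq] using hy2) (by simpa using (hc y hy1 hne))⟩⟩

lemma nonisol_inf (h : closure (Set.range a) = X) (hx : x ∈ X) (hni : ¬ Isol X x)
    {r : ℝ} (hr : 0 < r) : {k | |a k - x| < r}.Infinite := by
  intro hS
  set S := {k | |a k - x| < r} with hSdef
  have hV : (a '' S).Finite := hS.image a
  -- choose y ∈ X, y ≠ x, avoiding V := a '' S
  set V := a '' S with hVdef
  have hVc : IsClosed (V \ {x} : Set ℝ) := hV.diff.isClosed
  -- radius avoiding V \ {x}
  obtain ⟨r₁, hr₁, hr₁V⟩ : ∃ r₁ > 0, ∀ v ∈ V \ {x}, r₁ ≤ |v - x| := by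
    rcases (V \ {x}).eq_empty_or_nonempty with he | hne
    · exact ⟨1, one_pos, by simp [he]⟩
    · have hxV : x ∉ (V \ {x} : Set ℝ) := by simp
      have := (hVc.notMem_iff_infDist_pos hne).1 hxV
      refine ⟨infDist x (V \ {x}), this, fun v hv => ?_⟩
      have h2 := infDist_le_dist_of_mem (x := x) hv
      rwa [Real.dist_eq, abs_sub_comm] at h2
  obtain ⟨y, hyX, hyx, hyr⟩ := notIsol hx hni (lt_min hr₁ hr)
  have hyV : y ∉ V := by
    intro hyV
    have : y ∈ V \ {x} := ⟨hyV, hyx⟩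
    exact absurd (hyr.trans_le (min_le_left _ _)) (not_lt.2 (hr₁V y this))
  -- approximate y by the sequence within distance min (r - |y-x|) (infDist y V)
  have hy2 : y ∉ closure V := by rwa [hV.isClosed.closure_eq]
  have hdy : 0 < infDist y V ∨ V = ∅ := by
    rcases V.eq_empty_or_nonempty with he | hne
    · exact Or.inr he
    · exact Or.inl ((hV.isClosed.notMem_iff_infDist_pos hne).1 hyV)
  have hry : 0 < r - |y - x| := by
    have : |y - x| < r := hyr.trans_le (min_le_right _ _)
    linarith
  rcases hdy with hdy | hdy
  · obtain ⟨j, hj⟩ := approx h hyX (lt_min hry hdy)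
    have hjS : j ∈ S := by
      have : |a j - x| < r := by
        calc |a j - x| ≤ |a j - y| + |y - x| := abs_sub_le _ _ _
        _ < (r - |y - x|) + |y - x| := by
            have := hj.trans_le (min_le_left _ _); linarith
        _ = r := by ring
      exact this
    have : infDist y V ≤ |a j - y| := by
      have := infDist_le_dist_of_mem (x := y) (mem_image_of_mem a hjS)
      rwa [Real.dist_eq, abs_sub_comm] at this
    exact absurd (hj.trans_le (min_le_right _ _)) (not_lt.2 this)
  · obtain ⟨j, hj⟩ := approx h hyX hry
    have hjS : j ∈ S := by
      have : |a j - x| < r := by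
        calc |a j - x| ≤ |a j - y| + |y - x| := abs_sub_le _ _ _
        _ < (r - |y - x|) + |y - x| := by linarith
        _ = r := by ring
      exact this
    have : a j ∈ V := mem_image_of_mem a hjS
    rw [hdy] at this
    exact this

lemma pigeon {S : Set ℕ} (hS : S.Infinite) (hV : (a '' S).Finite) :
    ∃ y, {k | k ∈ S ∧ a k = y}.Infinite := by
  by_contra hc
  push_neg at hc
  refine hS ((hV.biUnion (fun y _ => hc y)).subset fun k hk => ?_)
  exact Set.mem_biUnion (Set.mem_image_of_mem a hk) ⟨hk, rfl⟩

lemma card_finite_iff {s t : Set ℕ} (h : Cardinal.mk s = Cardinal.mk t) :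
    s.Finite ↔ t.Finite := by
  rw [← Set.finite_coe_iff, ← Set.finite_coe_iff, ← Cardinal.lt_aleph0_iff_finite,
    ← Cardinal.lt_aleph0_iff_finite, h]

/-- If an infinite set of values of the (dense-in-X) sequence `b` lies within `r/2` of `z`,
then the `r`-ball at `z` contains infinitely many indices of `b`. -/
lemma ball_inf_aux {b : ℕ → ℝ} (hb : closure (Set.range b) = X) {D : Set ℝ} {r : ℝ}
    (hD : D.Infinite) (hDX : D ⊆ X) (hDz : ∀ y ∈ D, |y - z| < r/2) :
    {j | |b j - z| < r}.Infinite := by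
  intro hS
  set V := b '' {j | |b j - z| < r} with hVdef
  have hV : V.Finite := hS.image b
  obtain ⟨y, hyD, hyV⟩ := (hD.diff hV).nonempty
  have hyz : |y - z| < r/2 := hDz y hyD
  have hyX : y ∈ X := hDX hyD
  have hry : 0 < r - |y - z| := by
    have h2 : 0 ≤ |y - z| := abs_nonneg _
    linarith
  rcases V.eq_empty_or_nonempty with he | hne
  · obtain ⟨j, hj⟩ := approx hb hyX hry
    have hjS : |b j - z| < r := by
      calc |b j - z| ≤ |b j - y| + |y - z| := abs_sub_le _ _ _
      _ < (r - |y - z|) + |y - z| := by linarith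
      _ = r := by ring
    have : b j ∈ V := ⟨j, hjS, rfl⟩
    rw [he] at this
    exact this
  · have hpos : 0 < infDist y V := (hV.isClosed.notMem_iff_infDist_pos hne).1 hyV
    obtain ⟨j, hj⟩ := approx hb hyX (lt_min hry hpos)
    have hjS : |b j - z| < r := by
      have h1 : |b j - y| < r - |y - z| := hj.trans_le (min_le_left _ _)
      calc |b j - z| ≤ |b j - y| + |y - z| := abs_sub_le _ _ _
      _ < (r - |y - z|) + |y - z| := by linarith
      _ = r := by ring
    have hle : infDist y V ≤ |b j - y| := by
      have hmem : b j ∈ V := ⟨j, hjS, rfl⟩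
      have := infDist_le_dist_of_mem (x := y) hmem
      rwa [Real.dist_eq, abs_sub_comm] at this
    exact absurd (hj.trans_le (min_le_right _ _)) (not_lt.2 hle)

end Basic

/-- Bundled context. -/
structure Ctx (ξ ζ : ℕ → ℝ) (X : Set ℝ) : Prop where
  cl₁ : closure (Set.range ξ) = X
  cl₂ : closure (Set.range ζ) = X
  iso : ∀ x ∈ X, Isol X x → Cardinal.mk (Fib ξ x) = Cardinal.mk (Fib ζ x)

namespace Ctx

variable {ξ ζ : ℕ → ℝ} {X : Set ℝ} {x z : ℝ}

lemma symm (c : Ctx ξ ζ X) : Ctx ζ ξ X :=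
  ⟨c.cl₂, c.cl₁, fun x hx hi => (c.iso x hx hi).symm⟩

lemma rig_mirror (c : Ctx ξ ζ X) (h : Rig ξ X x) : Rig ζ X x :=
  ⟨h.1, h.2.1, (card_finite_iff (c.iso x h.1 h.2.1)).1 h.2.2⟩

lemma nonrig_thk_self (c : Ctx ξ ζ X) (hx : x ∈ X) (h : ¬ Rig ξ X x) : Thk ξ x := by
  intro r hr
  rcases Classical.em (Isol X x) with hi | hi
  · have hfib : (Fib ξ x).Infinite := by
      by_contra hf
      exact h ⟨hx, hi, Set.not_infinite.1 hf⟩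
    exact hfib.mono fun k hk => by
      have : ξ k = x := hk
      simp [this, hr]
  · exact nonisol_inf c.cl₁ hx hi hr

lemma nonrig_thk_cross (c : Ctx ξ ζ X) (hx : x ∈ X) (h : ¬ Rig ξ X x) : Thk ζ x := by
  intro r hr
  rcases Classical.em (Isol X x) with hi | hi
  · have hfib : (Fib ξ x).Infinite := by
      by_contra hf
      exact h ⟨hx, hi, Set.not_infinite.1 hf⟩
    have hfib2 : (Fib ζ x).Infinite :=
      fun hf => hfib ((card_finite_iff (c.iso x hx hi)).2 hf)
    exact hfib2.mono fun k hk => by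
      have : ζ k = x := hk
      simp [this, hr]
  · exact nonisol_inf c.cl₂ hx hi hr

lemma thk_mirror (c : Ctx ξ ζ X) (h : Thk ξ z) : Thk ζ z := by
  intro r hr
  have hS := h (r/2) (by linarith)
  set S := {k | |ξ k - z| < r/2} with hSdef
  rcases Classical.em ((ξ '' S).Finite) with hV | hV
  · obtain ⟨y, hy⟩ := pigeon hS hV
    obtain ⟨k₀, hk₀S, hk₀y⟩ := hy.nonempty
    have hyX : y ∈ X := hk₀y ▸ mem_X c.cl₁ k₀
    have hyz : |y - z| < r/2 := hk₀y ▸ hk₀S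
    have hnr : ¬ Rig ξ X y := by
      intro hrig
      exact (hy.mono fun k hk => (hk.2 : ξ k = y)) hrig.2.2
    have := c.nonrig_thk_cross hyX hnr (r/2) (by linarith)
    exact this.mono fun j hj => by
      have : |ζ j - y| < r/2 := hj
      calc |ζ j - z| ≤ |ζ j - y| + |y - z| := abs_sub_le _ _ _
      _ < r/2 + r/2 := by linarith
      _ = r := by ring
  · refine ball_inf_aux c.cl₂ (fun hf => hV hf) ?_ ?_
    · rintro y ⟨k, _, rfl⟩
      exact mem_X c.cl₁ k
    · rintro y ⟨k, hk, rfl⟩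
      exact hk

end Ctx

open scoped Classical in
/-- the steal lemma: near a thick point one can always find a fresh pool index. -/
lemma steal {b : ℕ → ℝ} {X : Set ℝ} {z t ε : ℝ} (hb : closure (Set.range b) = X)
    {NT : ℝ → Prop} (hNT : ∀ y, |y - z| < ε/4 → NT y)
    (hz : Thk b z) (ht : 0 < t) (htε : t ≤ ε/4) {M : Set ℕ} (hM : M.Finite) :
    ∃ j, j ∈ Pool b X NT ∧ j ∉ M ∧ |b j - z| < t := by
  have hS : {j | |b j - z| < t}.Infinite := hz t ht
  set S := {j | |b j - z| < t} with hSdef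
  rcases Classical.em ((b '' S).Finite) with hV | hV
  · obtain ⟨y, hy⟩ := pigeon hS hV
    obtain ⟨j, hjS, hjy⟩ := (hy.diff hM).nonempty
    refine ⟨j, Or.inl ?_, hjy, hjS.1⟩
    intro hrig
    exact (hy.mono fun k hk => (hk.2 : b k = y)) (hjS.2 ▸ hrig.2.2)
  · have hVinf : (b '' S).Infinite := hV
    set φ : ℝ → ℕ := fun y => if Rig b X y then don b y else sInf (Fib b y) with hφ
    have hφ_fib : ∀ y ∈ b '' S, b (φ y) = y := by
      rintro y ⟨k, hk, rfl⟩
      have hne : (Fib b (b k)).Nonempty := ⟨k, rfl⟩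
      simp only [hφ, don]
      split <;> exact Nat.sInf_mem hne
    have hφ_inj : Set.InjOn φ (b '' S) := fun y₁ h₁ y₂ h₂ he => by
      rw [← hφ_fib y₁ h₁, ← hφ_fib y₂ h₂, he]
    have hφ_img : (φ '' (b '' S)).Infinite := (hVinf.image hφ_inj)
    obtain ⟨j, hjI, hjM⟩ := (hφ_img.diff hM).nonempty
    obtain ⟨y, hyS, rfl⟩ := hjI
    have hby : b (φ y) = y := hφ_fib y hyS
    obtain ⟨k, hkS, hky⟩ := hyS
    have hyz : |y - z| < t := hky ▸ hkS
    refine ⟨φ y, ?_, hjM, by rwa [hby]⟩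
    rcases Classical.em (Rig b X y) with hrig | hrig
    · refine Or.inr ⟨?_, ?_⟩
      · rw [hby]; exact hNT y (lt_of_lt_of_le hyz htε)
      · conv_lhs => rw [hφ]
        simp only [if_pos hrig]
        rw [hby]
    · refine Or.inl ?_
      rw [hby]
      exact hrig

/-! ## The matching state machine -/

/-- tolerance schedule -/
noncomputable def τf (ε : ℝ) (c : ℕ) : ℝ := ε/8 * (1/2)^c

lemma τf_pos {ε : ℝ} (hε : 0 < ε) (c : ℕ) : 0 < τf ε c := by
  have : (0:ℝ) < (1/2)^c := by positivity
  unfold τf; positivity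

lemma τf_le {ε : ℝ} (hε : 0 < ε) (c : ℕ) : τf ε c ≤ ε/8 := by
  unfold τf
  have h1 : ((1:ℝ)/2)^c ≤ 1 := pow_le_one₀ (by norm_num) (by norm_num)
  nlinarith

lemma τf_anti {ε : ℝ} (hε : 0 < ε) {c c' : ℕ} (h : c ≤ c') : τf ε c' ≤ τf ε c := by
  unfold τf
  have := pow_le_pow_of_le_one (by norm_num : (0:ℝ) ≤ 1/2) (by norm_num) h
  nlinarith

lemma τf_tendsto {ε : ℝ} (hε : 0 < ε) : Filter.Tendsto (τf ε) Filter.atTop (nhds 0) := by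
  have h := tendsto_pow_atTop_nhds_zero_of_lt_one (by norm_num : (0:ℝ) ≤ 1/2) (by norm_num)
  have h2 := h.const_mul (ε/8)
  rw [mul_zero] at h2
  refine Filter.Tendsto.congr (f₁ := fun c => ε/8 * (1/2)^c) (fun c => rfl) h2

/-- state of the back-and-forth construction -/
structure St where
  L : List (ℕ × ℕ × ℕ)
  wx : List (ℕ × ℝ × ℕ)
  wz : List (ℕ × ℝ × ℕ)
  n : ℕ

/-- matched first (ξ-side) indices -/
def Mf (L : List (ℕ × ℕ × ℕ)) : Set ℕ := {k | ∃ p ∈ L, p.1 = k}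
/-- matched second (ζ-side) indices -/
def Ms (L : List (ℕ × ℕ × ℕ)) : Set ℕ := {k | ∃ p ∈ L, p.2.1 = k}

lemma Mf_finite (L : List (ℕ × ℕ × ℕ)) : (Mf L).Finite := by
  have : Mf L ⊆ (fun p : ℕ × ℕ × ℕ => p.1) '' {p | p ∈ L} := by
    rintro k ⟨p, hp, rfl⟩; exact ⟨p, hp, rfl⟩
  exact (L.finite_toSet.image _).subset this

lemma Ms_finite (L : List (ℕ × ℕ × ℕ)) : (Ms L).Finite := by
  have : Ms L ⊆ (fun p : ℕ × ℕ × ℕ => p.2.1) '' {p | p ∈ L} := by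
    rintro k ⟨p, hp, rfl⟩; exact ⟨p, hp, rfl⟩
  exact (L.finite_toSet.image _).subset this

section Machine

variable (ξ ζ : ℕ → ℝ) (X : Set ℝ) (NT : ℝ → Prop) (ε : ℝ)

/-- the big invariant -/
structure Inv (s : St) : Prop where
  ndk : (s.L.map (·.1)).Nodup
  ndj : (s.L.map (·.2.1)).Nodup
  mem : ∀ p ∈ s.L, p.1 ∈ Pool ξ X NT ∧ p.2.1 ∈ Pool ζ X NT
  err : ∀ p ∈ s.L, |ξ p.1 - ζ p.2.1| < 2 * τf ε p.2.2
  cle : ∀ p ∈ s.L, p.2.2 < 2 * s.n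
  evnd : ∀ p ∈ s.L, ∀ q ∈ s.L, p.2.2 = q.2.2 → p.2.2 % 2 = 0 → p = q
  link : ∀ p ∈ s.L, p.2.2 % 2 = 0 ∨ (∃ z, (p.1, z, p.2.2) ∈ s.wx) ∨
    (∃ z, (p.2.1, z, p.2.2) ∈ s.wz)
  wxle : ∀ e ∈ s.wx, e.2.2 % 2 = 1 ∧ e.2.2 < 2 * s.n
  wzle : ∀ e ∈ s.wz, e.2.2 % 2 = 1 ∧ e.2.2 < 2 * s.n
  wndx : ∀ e ∈ s.wx, ∀ e' ∈ s.wx, e.2.2 = e'.2.2 → e = e'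
  wndz : ∀ e ∈ s.wz, ∀ e' ∈ s.wz, e.2.2 = e'.2.2 → e = e'
  wdisj : ∀ e ∈ s.wx, ∀ e' ∈ s.wz, e.2.2 ≠ e'.2.2
  wxv : ∀ e ∈ s.wx, Thk ξ e.2.1 ∧ Thk ζ e.2.1 ∧ |ξ e.1 - e.2.1| < τf ε e.2.2 ∧
    e.1 ∈ Pool ξ X NT
  wzv : ∀ e ∈ s.wz, Thk ξ e.2.1 ∧ Thk ζ e.2.1 ∧ |ζ e.1 - e.2.1| < τf ε e.2.2 ∧
    e.1 ∈ Pool ζ X NT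
  ea₁ : ∀ k ∈ Pool ξ X NT, k ∉ Mf s.L → Rig ξ X (ξ k) →
    (∃ e ∈ s.wx, e.1 = k) ∨ ∃ j ∈ Pool ζ X NT, j ∉ Ms s.L ∧ ζ j = ξ k
  ea₂ : ∀ j ∈ Pool ζ X NT, j ∉ Ms s.L → Rig ζ X (ζ j) →
    (∃ e ∈ s.wz, e.1 = j) ∨ ∃ k ∈ Pool ξ X NT, k ∉ Mf s.L ∧ ξ k = ζ j

end Machine

/-- swap a state -/
def St.swap (s : St) : St :=
  ⟨s.L.map (fun p => (p.2.1, p.1, p.2.2)), s.wz, s.wx, s.n⟩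

lemma Mf_swap (s : St) : Mf s.swap.L = Ms s.L := by
  ext k
  constructor
  · rintro ⟨p, hp, rfl⟩
    obtain ⟨q, hq, rfl⟩ := List.mem_map.1 hp
    exact ⟨q, hq, rfl⟩
  · rintro ⟨p, hp, rfl⟩
    exact ⟨(p.2.1, p.1, p.2.2), List.mem_map.2 ⟨p, hp, rfl⟩, rfl⟩

lemma Ms_swap (s : St) : Ms s.swap.L = Mf s.L := by
  ext k
  constructor
  · rintro ⟨p, hp, rfl⟩
    obtain ⟨q, hq, rfl⟩ := List.mem_map.1 hp
    exact ⟨q, hq, rfl⟩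
  · rintro ⟨p, hp, rfl⟩
    exact ⟨(p.2.1, p.1, p.2.2), List.mem_map.2 ⟨p, hp, rfl⟩, rfl⟩

lemma Inv.swap {ξ ζ : ℕ → ℝ} {X : Set ℝ} {NT : ℝ → Prop} {ε : ℝ} {s : St}
    (h : Inv ξ ζ X NT ε s) : Inv ζ ξ X NT ε s.swap := by
  have hmm : ∀ p, p ∈ s.swap.L ↔ ∃ q ∈ s.L, (q.2.1, q.1, q.2.2) = p := by
    intro p; exact List.mem_map
  constructor
  · have := h.ndj
    rw [show s.swap.L.map (·.1) = s.L.map (·.2.1) by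
      simp [St.swap, List.map_map]]
    exact this
  · have := h.ndk
    rw [show s.swap.L.map (·.2.1) = s.L.map (·.1) by
      simp [St.swap, List.map_map]]
    exact this
  · intro p hp
    obtain ⟨q, hq, rfl⟩ := (hmm p).1 hp
    exact ⟨(h.mem q hq).2, (h.mem q hq).1⟩
  · intro p hp
    obtain ⟨q, hq, rfl⟩ := (hmm p).1 hp
    have := h.err q hq
    rw [abs_sub_comm] at this
    exact this
  · intro p hp
    obtain ⟨q, hq, rfl⟩ := (hmm p).1 hp
    exact h.cle q hq
  · intro p hp q hq he hev
    obtain ⟨p', hp', rfl⟩ := (hmm p).1 hp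
    obtain ⟨q', hq', rfl⟩ := (hmm q).1 hq
    rw [h.evnd p' hp' q' hq' he hev]
  · intro p hp
    obtain ⟨q, hq, rfl⟩ := (hmm p).1 hp
    rcases h.link q hq with h1 | h2 | h3
    · exact Or.inl h1
    · exact Or.inr (Or.inr h2)
    · exact Or.inr (Or.inl h3)
  · exact h.wzle
  · exact h.wxle
  · exact h.wndz
  · exact h.wndx
  · exact fun e he e' he' => (h.wdisj e' he' e he).symm
  · intro e he
    obtain ⟨h1, h2, h3, h4⟩ := h.wzv e he
    exact ⟨h2, h1, h3, h4⟩
  · intro e he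
    obtain ⟨h1, h2, h3, h4⟩ := h.wxv e he
    exact ⟨h2, h1, h3, h4⟩
  · intro k hk hm hr
    rw [Mf_swap] at hm
    rcases h.ea₂ k hk hm hr with h1 | h2
    · exact Or.inl h1
    · rw [Ms_swap]
      exact Or.inr h2
  · intro j hj hm hr
    rw [Ms_swap] at hm
    rcases h.ea₁ j hj hm hr with h1 | h2
    · exact Or.inl h1
    · rw [Mf_swap]
      exact Or.inr h2

lemma Mf_concat (L : List (ℕ × ℕ × ℕ)) (p : ℕ × ℕ × ℕ) (k : ℕ) :
    k ∈ Mf (L ++ [p]) ↔ k ∈ Mf L ∨ k = p.1 := by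
  simp only [Mf, Set.mem_setOf_eq, List.mem_append, List.mem_singleton]
  constructor
  · rintro ⟨q, hq | rfl, rfl⟩
    · exact Or.inl ⟨q, hq, rfl⟩
    · exact Or.inr rfl
  · rintro (⟨q, hq, rfl⟩ | rfl)
    · exact ⟨q, Or.inl hq, rfl⟩
    · exact ⟨p, Or.inr rfl, rfl⟩

lemma Ms_concat (L : List (ℕ × ℕ × ℕ)) (p : ℕ × ℕ × ℕ) (k : ℕ) :
    k ∈ Ms (L ++ [p]) ↔ k ∈ Ms L ∨ k = p.2.1 := by
  simp only [Ms, Set.mem_setOf_eq, List.mem_append, List.mem_singleton]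
  constructor
  · rintro ⟨q, hq | rfl, rfl⟩
    · exact Or.inl ⟨q, hq, rfl⟩
    · exact Or.inr rfl
  · rintro (⟨q, hq, rfl⟩ | rfl)
    · exact ⟨q, Or.inl hq, rfl⟩
    · exact ⟨p, Or.inr rfl, rfl⟩

lemma mem_Mf_iff {L : List (ℕ × ℕ × ℕ)} {k : ℕ} : k ∈ Mf L ↔ k ∈ L.map (·.1) := by
  simp [Mf, List.mem_map]

lemma mem_Ms_iff {L : List (ℕ × ℕ × ℕ)} {k : ℕ} : k ∈ Ms L ↔ k ∈ L.map (·.2.1) := by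
  simp [Ms, List.mem_map]

lemma nodup_concat {α β : Type*} (f : α → β) (L : List α) (x : α)
    (h : (L.map f).Nodup) (hx : f x ∉ L.map f) : ((L ++ [x]).map f).Nodup := by
  rw [List.map_append]
  simp only [List.map_cons, List.map_nil]
  rw [List.nodup_append]
  exact ⟨h, List.nodup_singleton _, by
    intro a ha b hb
    simp only [List.mem_singleton] at hb
    subst hb; rintro rfl; exact hx ha⟩

lemma pool_rigid_unique {ξ : ℕ → ℝ} {X : Set ℝ} {NT : ℝ → Prop} {k₁ k₂ : ℕ}
    (h₁ : k₁ ∈ Pool ξ X NT) (h₂ : k₂ ∈ Pool ξ X NT) (he : ξ k₁ = ξ k₂)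
    (hr : Rig ξ X (ξ k₁)) : k₁ = k₂ := by
  rcases h₁ with h₁ | ⟨_, h₁d⟩
  · exact absurd hr h₁
  rcases h₂ with h₂ | ⟨_, h₂d⟩
  · exact absurd (he ▸ hr) h₂
  rw [h₁d, h₂d, he]

section HalfStep

variable {ξ ζ : ℕ → ℝ} {X : Set ℝ} {NT : ℝ → Prop} {ε : ℝ}

lemma halfstep (c : Ctx ξ ζ X) (hε : 0 < ε)
    (hNT : ∀ z y, Thk ξ z → Thk ζ z → |y - z| < ε/4 → NT y)
    {s : St} (h : Inv ξ ζ X NT ε s) :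
    ∃ s' : St, Inv ξ ζ X NT ε s' ∧ s'.n = s.n + 1 ∧
      s.L.IsPrefix s'.L ∧ s.wx.IsPrefix s'.wx ∧ s.wz.IsPrefix s'.wz ∧
      ((Pool ξ X NT \ Mf s.L).Nonempty → sInf (Pool ξ X NT \ Mf s.L) ∈ Mf s'.L) := by
  set P₁ := Pool ξ X NT with hP₁
  set P₂ := Pool ζ X NT with hP₂
  rcases Set.eq_empty_or_nonempty (P₁ \ Mf s.L) with hne | hne
  · refine ⟨⟨s.L, s.wx, s.wz, s.n+1⟩, ?_, rfl, List.prefix_rfl, List.prefix_rfl,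
      List.prefix_rfl, fun h' => ?_⟩
    · exact ⟨h.ndk, h.ndj, h.mem, h.err,
        fun p hp => (h.cle p hp).trans_le (by change _ ≤ 2*(s.n+1); omega),
        h.evnd, h.link,
        fun e he => ⟨(h.wxle e he).1, (h.wxle e he).2.trans_le (by change _ ≤ 2*(s.n+1); omega)⟩,
        fun e he => ⟨(h.wzle e he).1, (h.wzle e he).2.trans_le (by change _ ≤ 2*(s.n+1); omega)⟩,
        h.wndx, h.wndz, h.wdisj, h.wxv, h.wzv, h.ea₁, h.ea₂⟩
    · rw [hne] at h'
      exact absurd h' (Set.not_nonempty_empty)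
  · set k := sInf (P₁ \ Mf s.L) with hkdef
    have hk : k ∈ P₁ \ Mf s.L := Nat.sInf_mem hne
    set y := ξ k with hydef
    have hyX : y ∈ X := mem_X c.cl₁ k
    by_cases hA : ∃ j ∈ P₂, j ∉ Ms s.L ∧ ζ j = y
    · -- exact match available
      obtain ⟨j, hjP, hjM, hjy⟩ := hA
      refine ⟨⟨s.L ++ [(k, j, 2*s.n)], s.wx, s.wz, s.n+1⟩, ?_, rfl,
        ⟨[(k, j, 2*s.n)], rfl⟩, List.prefix_rfl, List.prefix_rfl, fun _ => ?_⟩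
      · constructor
        · exact nodup_concat _ _ _ h.ndk (fun hc => hk.2 (mem_Mf_iff.2 hc))
        · exact nodup_concat _ _ _ h.ndj (fun hc => hjM (mem_Ms_iff.2 hc))
        · intro p hp
          rcases List.mem_append.1 hp with hp | hp
          · exact h.mem p hp
          · simp only [List.mem_singleton] at hp
            subst hp
            exact ⟨hk.1, hjP⟩
        · intro p hp
          rcases List.mem_append.1 hp with hp | hp
          · exact h.err p hp
          · simp only [List.mem_singleton] at hp
            subst hp
            simp only
            rw [show ξ k - ζ j = 0 by rw [hjy]; ring]
            simpa using mul_pos two_pos (τf_pos hε (2*s.n))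
        · intro p hp
          rcases List.mem_append.1 hp with hp | hp
          · exact (h.cle p hp).trans_le (by change _ ≤ 2*(s.n+1); omega)
          · simp only [List.mem_singleton] at hp
            subst hp
            change 2*s.n < 2*(s.n+1)
            omega
        · intro p hp q hq he hev
          rcases List.mem_append.1 hp with hp | hp <;>
            rcases List.mem_append.1 hq with hq | hq
          · exact h.evnd p hp q hq he hev
          · simp only [List.mem_singleton] at hq
            subst hq
            exact absurd he (by change p.2.2 ≠ 2*s.n; have := h.cle p hp; omega)
          · simp only [List.mem_singleton] at hp
            subst hp
            exact absurd he (by change 2*s.n ≠ q.2.2; have := h.cle q hq; omega)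
          · simp only [List.mem_singleton] at hp hq
            rw [hp, hq]
        · intro p hp
          rcases List.mem_append.1 hp with hp | hp
          · exact h.link p hp
          · simp only [List.mem_singleton] at hp
            subst hp
            exact Or.inl (by change 2*s.n % 2 = 0; omega)
        · exact fun e he => ⟨(h.wxle e he).1, (h.wxle e he).2.trans_le (by change _ ≤ 2*(s.n+1); omega)⟩
        · exact fun e he => ⟨(h.wzle e he).1, (h.wzle e he).2.trans_le (by change _ ≤ 2*(s.n+1); omega)⟩
        · exact h.wndx
        · exact h.wndz
        · exact h.wdisj
        · exact h.wxv
        · exact h.wzv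
        · intro k' hk' hm' hr'
          rw [Mf_concat] at hm'
          push_neg at hm'
          rcases h.ea₁ k' hk' hm'.1 hr' with he' | ⟨j', hj'P, hj'M, hj'y⟩
          · exact Or.inl he'
          · by_cases hjj : j' = j
            · subst hjj
              have : ξ k' = ξ k := by rw [← hj'y, hjy]
              exact absurd (pool_rigid_unique hk' hk.1 this hr') hm'.2
            · refine Or.inr ⟨j', hj'P, ?_, hj'y⟩
              rw [Ms_concat]
              push_neg
              exact ⟨hj'M, hjj⟩
        · intro j' hj' hm' hr'
          rw [Ms_concat] at hm'
          push_neg at hm'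
          rcases h.ea₂ j' hj' hm'.1 hr' with he' | ⟨k'', hk''P, hk''M, hk''y⟩
          · exact Or.inl he'
          · by_cases hkk : k'' = k
            · subst hkk
              have : ζ j' = ζ j := by rw [← hk''y, hjy]
              exact absurd (pool_rigid_unique hj' hjP this hr') hm'.2
            · refine Or.inr ⟨k'', hk''P, ?_, hk''y⟩
              rw [Mf_concat]
              push_neg
              exact ⟨hk''M, hkk⟩
      · rw [Mf_concat]
        exact Or.inr rfl
    · -- no exact match: steal near a thick point
      have hgen : ∃ z cc, Thk ξ z ∧ Thk ζ z ∧ |y - z| < τf ε cc ∧ cc ≤ 2*s.n ∧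
          (cc = 2*s.n ∨ (cc % 2 = 1 ∧ (k, z, cc) ∈ s.wx)) := by
        by_cases hrig : Rig ξ X y
        · rcases h.ea₁ k hk.1 hk.2 hrig with ⟨e, he, hek⟩ | hex
          · obtain ⟨hT₁, hT₂, herr, _⟩ := h.wxv e he
            refine ⟨e.2.1, e.2.2, hT₁, hT₂, ?_, ?_, Or.inr ⟨(h.wxle e he).1, ?_⟩⟩
            · rw [hydef, ← hek]; exact herr
            · have := (h.wxle e he).2; omega
            · rw [← hek]; exact he
          · exact absurd hex hA
        · refine ⟨y, 2*s.n, c.nonrig_thk_self hyX hrig, c.nonrig_thk_cross hyX hrig,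
            by simp only [sub_self, abs_zero]; exact τf_pos hε (2*s.n), le_refl _,
            Or.inl rfl⟩
      obtain ⟨z, cc, hThξ, hThζ, hyz, hccle, hlinkd⟩ := hgen
      have ht4 : τf ε (2*s.n+1) ≤ ε/4 := (τf_le hε _).trans (by linarith)
      obtain ⟨j, hjP, hjM, hjz⟩ := steal c.cl₂
        (fun y' hy' => hNT z y' hThξ hThζ hy') hThζ (τf_pos hε (2*s.n+1)) ht4
        (Ms_finite s.L)
      have herr : |ξ k - ζ j| < 2 * τf ε cc := by
        have h1 : τf ε (2*s.n+1) ≤ τf ε cc := τf_anti hε (by omega)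
        calc |ξ k - ζ j| ≤ |ξ k - z| + |ζ j - z| := by
              rw [abs_sub_comm (ζ j) z]
              exact abs_sub_le _ _ _
        _ < τf ε cc + τf ε (2*s.n+1) := by
              have : |ξ k - z| < τf ε cc := hyz
              linarith
        _ ≤ 2 * τf ε cc := by linarith
      -- possible new victim entry
      have hwe : ∃ we : List (ℕ × ℝ × ℕ),
          (∀ e ∈ we, e.2.2 = 2*s.n+1 ∧ Thk ξ e.2.1 ∧ Thk ζ e.2.1 ∧
            |ξ e.1 - e.2.1| < τf ε e.2.2 ∧ e.1 ∈ P₁) ∧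
          (∀ k', k' ∈ P₁ → k' ∉ Mf s.L → k' ≠ k → ξ k' = ζ j → Rig ξ X (ζ j) →
            ∃ e ∈ we, e.1 = k') ∧ (∀ e ∈ we, ∀ e' ∈ we, e = e') := by
        by_cases hvic : ∃ k'', k'' ∈ P₁ ∧ k'' ∉ Mf s.L ∧ k'' ≠ k ∧ ξ k'' = ζ j ∧
            Rig ξ X (ζ j)
        · obtain ⟨k'', hv₁, hv₂, hv₃, hv₄, hv₅⟩ := hvic
          refine ⟨[(k'', z, 2*s.n+1)], ?_, ?_, by
            intro e he e' he'
            simp only [List.mem_singleton] at he he'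
            rw [he, he']⟩
          · intro e he
            simp only [List.mem_singleton] at he
            subst he
            exact ⟨rfl, hThξ, hThζ, by simp only; rw [hv₄]; exact hjz, hv₁⟩
          · intro k' h₁ h₂ h₃ h₄ h₅
            refine ⟨(k'', z, 2*s.n+1), List.mem_singleton.2 rfl, ?_⟩
            exact pool_rigid_unique hv₁ h₁ (by rw [hv₄, h₄]) (hv₄ ▸ hv₅)
        · refine ⟨[], by simp, ?_, by simp⟩
          intro k' h₁ h₂ h₃ h₄ h₅
          exact absurd ⟨k', h₁, h₂, h₃, h₄, h₅⟩ hvic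
      obtain ⟨we, hwe₁, hwe₂, hwe₃⟩ := hwe
      refine ⟨⟨s.L ++ [(k, j, cc)], s.wx ++ we, s.wz, s.n+1⟩, ?_, rfl,
        ⟨[(k, j, cc)], rfl⟩, ⟨we, rfl⟩, List.prefix_rfl, fun _ => ?_⟩
      · constructor
        · exact nodup_concat _ _ _ h.ndk (fun hc => hk.2 (mem_Mf_iff.2 hc))
        · exact nodup_concat _ _ _ h.ndj (fun hc => hjM (mem_Ms_iff.2 hc))
        · intro p hp
          rcases List.mem_append.1 hp with hp | hp
          · exact h.mem p hp
          · simp only [List.mem_singleton] at hp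
            subst hp
            exact ⟨hk.1, hjP⟩
        · intro p hp
          rcases List.mem_append.1 hp with hp | hp
          · exact h.err p hp
          · simp only [List.mem_singleton] at hp
            subst hp
            exact herr
        · intro p hp
          rcases List.mem_append.1 hp with hp | hp
          · exact (h.cle p hp).trans_le (by change _ ≤ 2*(s.n+1); omega)
          · simp only [List.mem_singleton] at hp
            subst hp
            change cc < 2*(s.n+1)
            omega
        · intro p hp q hq he hev
          rcases List.mem_append.1 hp with hp | hp <;>
            rcases List.mem_append.1 hq with hq | hq
          · exact h.evnd p hp q hq he hev
          · simp only [List.mem_singleton] at hq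
            subst hq
            -- p old, q new: charge cc even means cc = 2 s.n per hev... need contradiction
            exfalso
            have hple := h.cle p hp
            have he' : p.2.2 = cc := he
            have hev' : p.2.2 % 2 = 0 := hev
            rcases hlinkd with hcc0 | ⟨hcco, _⟩ <;> omega
          · simp only [List.mem_singleton] at hp
            subst hp
            exfalso
            have hqle := h.cle q hq
            have he' : cc = q.2.2 := he
            have hev' : cc % 2 = 0 := hev
            rcases hlinkd with hcc0 | ⟨hcco, _⟩ <;> omega
          · simp only [List.mem_singleton] at hp hq
            rw [hp, hq]
        · intro p hp
          rcases List.mem_append.1 hp with hp | hp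
          · rcases h.link p hp with h1 | ⟨z', hz'⟩ | h3
            · exact Or.inl h1
            · exact Or.inr (Or.inl ⟨z', List.mem_append_left _ hz'⟩)
            · exact Or.inr (Or.inr h3)
          · simp only [List.mem_singleton] at hp
            subst hp
            rcases hlinkd with h1 | ⟨_, h2⟩
            · exact Or.inl (by change cc % 2 = 0; omega)
            · exact Or.inr (Or.inl ⟨z, List.mem_append_left _ h2⟩)
        · intro e he
          rcases List.mem_append.1 he with he | he
          · exact ⟨(h.wxle e he).1, (h.wxle e he).2.trans_le (by change _ ≤ 2*(s.n+1); omega)⟩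
          · have h1 := (hwe₁ e he).1
            change e.2.2 % 2 = 1 ∧ e.2.2 < 2*(s.n+1)
            omega
        · exact fun e he => ⟨(h.wzle e he).1, (h.wzle e he).2.trans_le (by change _ ≤ 2*(s.n+1); omega)⟩
        · intro e he e' he'
          rcases List.mem_append.1 he with he | he <;>
            rcases List.mem_append.1 he' with he' | he'
          · exact h.wndx e he e' he'
          · intro hc
            exfalso
            have := (h.wxle e he).2
            have := (hwe₁ e' he').1
            omega
          · intro hc
            exfalso
            have := (h.wxle e' he').2
            have := (hwe₁ e he).1
            omega
          · intro _
            exact hwe₃ e he e' he'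
        · exact h.wndz
        · intro e he e' he'
          rcases List.mem_append.1 he with he | he
          · exact h.wdisj e he e' he'
          · have h1 := (hwe₁ e he).1
            have h2 := (h.wzle e' he').2
            omega
        · intro e he
          rcases List.mem_append.1 he with he | he
          · exact h.wxv e he
          · obtain ⟨_, hT₁, hT₂, herr', hP⟩ := hwe₁ e he
            exact ⟨hT₁, hT₂, herr', hP⟩
        · exact h.wzv
        · intro k' hk' hm' hr'
          rw [Mf_concat] at hm'
          push_neg at hm'
          rcases h.ea₁ k' hk' hm'.1 hr' with ⟨e, he, hek⟩ | ⟨j', hj'P, hj'M, hj'y⟩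
          · exact Or.inl ⟨e, List.mem_append_left _ he, hek⟩
          · by_cases hjj : j' = j
            · subst hjj
              obtain ⟨e, he, hek⟩ := hwe₂ k' hk' hm'.1 hm'.2 hj'y.symm
                (by rw [hj'y]; exact hr')
              exact Or.inl ⟨e, List.mem_append_right _ he, hek⟩
            · refine Or.inr ⟨j', hj'P, ?_, hj'y⟩
              rw [Ms_concat]
              push_neg
              exact ⟨hj'M, hjj⟩
        · intro j' hj' hm' hr'
          rw [Ms_concat] at hm'
          push_neg at hm'
          rcases h.ea₂ j' hj' hm'.1 hr' with ⟨e, he, hej⟩ | ⟨k'', hk''P, hk''M, hk''y⟩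
          · exact Or.inl ⟨e, he, hej⟩
          · by_cases hkk : k'' = k
            · subst hkk
              exfalso
              exact hA ⟨j', hj', hm'.1, hk''y.symm⟩
            · refine Or.inr ⟨k'', hk''P, ?_, hk''y⟩
              rw [Mf_concat]
              push_neg
              exact ⟨hk''M, hkk⟩
      · rw [Mf_concat]
        exact Or.inr rfl

end HalfStep

section FullStep

variable {ξ ζ : ℕ → ℝ} {X : Set ℝ} {NT : ℝ → Prop} {ε : ℝ}

lemma swL_invol (L : List (ℕ × ℕ × ℕ)) :
    (L.map (fun p : ℕ×ℕ×ℕ => (p.2.1, p.1, p.2.2))).map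
      (fun p : ℕ×ℕ×ℕ => (p.2.1, p.1, p.2.2)) = L := by
  rw [List.map_map]
  exact List.map_id'' (fun p => rfl) L

lemma St.swap_swap (s : St) : s.swap.swap = s := by
  cases s
  simp only [St.swap, swL_invol]

lemma fullstep (c : Ctx ξ ζ X) (hε : 0 < ε)
    (hNT : ∀ z y, Thk ξ z → Thk ζ z → |y - z| < ε/4 → NT y)
    {s : St} (h : Inv ξ ζ X NT ε s) :
    ∃ s' : St, Inv ξ ζ X NT ε s' ∧ s'.n = s.n + 1 ∧
      s.L.IsPrefix s'.L ∧ s.wx.IsPrefix s'.wx ∧ s.wz.IsPrefix s'.wz ∧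
      (s.n % 2 = 0 → (Pool ξ X NT \ Mf s.L).Nonempty →
        sInf (Pool ξ X NT \ Mf s.L) ∈ Mf s'.L) ∧
      (s.n % 2 = 1 → (Pool ζ X NT \ Ms s.L).Nonempty →
        sInf (Pool ζ X NT \ Ms s.L) ∈ Ms s'.L) := by
  rcases Nat.even_or_odd s.n with hpar | hpar
  · obtain ⟨s', h1, h2, h3, h4, h5, h6⟩ := halfstep c hε hNT h
    refine ⟨s', h1, h2, h3, h4, h5, fun _ => h6, fun ho => ?_⟩
    exfalso
    obtain ⟨t, ht⟩ := hpar
    omega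
  · have hNT' : ∀ z y, Thk ζ z → Thk ξ z → |y - z| < ε/4 → NT y :=
      fun z y h2 h1 h3 => hNT z y h1 h2 h3
    obtain ⟨t', h1, h2, h3, h4, h5, h6⟩ := halfstep c.symm hε hNT' h.swap
    refine ⟨t'.swap, h1.swap, h2, ?_, h5, h4, fun he => ?_, fun _ hne => ?_⟩
    · have hpre : s.swap.L.map (fun p : ℕ×ℕ×ℕ => (p.2.1, p.1, p.2.2)) |>.IsPrefix
          (t'.L.map (fun p : ℕ×ℕ×ℕ => (p.2.1, p.1, p.2.2))) := h3.map _
      have : s.swap.L.map (fun p : ℕ×ℕ×ℕ => (p.2.1, p.1, p.2.2)) = s.L := swL_invol s.L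
      rw [this] at hpre
      exact hpre
    · exfalso
      obtain ⟨t, ht⟩ := hpar
      omega
    · have h6' := h6 (by rwa [Mf_swap] )
      rw [Mf_swap] at h6'
      rw [Ms_swap]
      exact h6'

end FullStep



section Chain

variable {ξ ζ : ℕ → ℝ} {X : Set ℝ} {NT : ℝ → Prop} {ε : ℝ}

lemma fib_nonempty_mirror {s t : Set ℕ} (h : Cardinal.mk s = Cardinal.mk t)
    (hs : s.Nonempty) : t.Nonempty := by
  rw [← Set.nonempty_coe_sort] at hs ⊢
  rw [← Cardinal.mk_ne_zero_iff] at hs ⊢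
  rwa [← h]

lemma inv_zero (c : Ctx ξ ζ X) : Inv ξ ζ X NT ε ⟨[], [], [], 0⟩ := by
  constructor
  case ndk => simp
  case ndj => simp
  case mem => simp
  case err => simp
  case cle => simp
  case evnd => simp
  case link => simp
  case wxle => simp
  case wzle => simp
  case wndx => simp
  case wndz => simp
  case wdisj => simp
  case wxv => simp
  case wzv => simp
  case ea₁ =>
    intro k hk _ hr
    rcases hk with hnr | ⟨hnt, hdon⟩
    · exact absurd hr hnr
    · have hfib : (Fib ζ (ξ k)).Nonempty :=
        fib_nonempty_mirror (c.iso (ξ k) hr.1 hr.2.1) ⟨k, rfl⟩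
      set j := sInf (Fib ζ (ξ k)) with hj
      have hjf : ζ j = ξ k := Nat.sInf_mem hfib
      refine Or.inr ⟨j, Or.inr ⟨by rwa [hjf], by rw [hjf]; exact hj⟩, by simp [Ms], hjf⟩
  case ea₂ =>
    intro j hj _ hr
    rcases hj with hnr | ⟨hnt, hdon⟩
    · exact absurd hr hnr
    · have hfib : (Fib ξ (ζ j)).Nonempty :=
        fib_nonempty_mirror ((c.iso (ζ j) hr.1 hr.2.1).symm) ⟨j, rfl⟩
      set k := sInf (Fib ξ (ζ j)) with hk
      have hkf : ξ k = ζ j := Nat.sInf_mem hfib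
      refine Or.inr ⟨k, Or.inr ⟨by rwa [hkf], by rw [hkf]; exact hk⟩, by simp [Mf], hkf⟩

variable (c : Ctx ξ ζ X) (hε : 0 < ε)
  (hNT : ∀ z y, Thk ξ z → Thk ζ z → |y - z| < ε/4 → NT y)

noncomputable def chain : ℕ → {s : St // Inv ξ ζ X NT ε s}
  | 0 => ⟨⟨[], [], [], 0⟩, inv_zero c⟩
  | n+1 => ⟨(fullstep c hε hNT (chain n).2).choose,
      (fullstep c hε hNT (chain n).2).choose_spec.1⟩

lemma chain_spec (n : ℕ) :
    ((chain c hε hNT (n+1) : {s : St // _}) : {s : St // _}).1.n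
        = (chain c hε hNT n).1.n + 1 ∧
      (chain c hε hNT n).1.L.IsPrefix (chain c hε hNT (n+1)).1.L ∧
      (chain c hε hNT n).1.wx.IsPrefix (chain c hε hNT (n+1)).1.wx ∧
      (chain c hε hNT n).1.wz.IsPrefix (chain c hε hNT (n+1)).1.wz ∧
      ((chain c hε hNT n).1.n % 2 = 0 →
        (Pool ξ X NT \ Mf (chain c hε hNT n).1.L).Nonempty →
        sInf (Pool ξ X NT \ Mf (chain c hε hNT n).1.L) ∈
          Mf (chain c hε hNT (n+1)).1.L) ∧
      ((chain c hε hNT n).1.n % 2 = 1 →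
        (Pool ζ X NT \ Ms (chain c hε hNT n).1.L).Nonempty →
        sInf (Pool ζ X NT \ Ms (chain c hε hNT n).1.L) ∈
          Ms (chain c hε hNT (n+1)).1.L) := by
  have h := (fullstep c hε hNT (chain c hε hNT n).2).choose_spec
  exact ⟨h.2.1, h.2.2.1, h.2.2.2.1, h.2.2.2.2.1, h.2.2.2.2.2.1, h.2.2.2.2.2.2⟩

lemma chain_n (n : ℕ) : (chain c hε hNT n).1.n = n := by
  induction n with
  | zero => rfl
  | succ n ih => rw [(chain_spec c hε hNT n).1, ih]

lemma chain_mono {m n : ℕ} (h : m ≤ n) :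
    (chain c hε hNT m).1.L.IsPrefix (chain c hε hNT n).1.L := by
  induction n with
  | zero =>
    rw [Nat.le_zero.1 h]
  | succ n ih =>
    rcases Nat.lt_or_ge m (n+1) with h' | h'
    · exact (ih (by omega)).trans (chain_spec c hε hNT n).2.1
    · rw [Nat.le_antisymm h h']

lemma Mf_mono {m n : ℕ} (h : m ≤ n) :
    Mf (chain c hε hNT m).1.L ⊆ Mf (chain c hε hNT n).1.L := by
  rintro k ⟨p, hp, rfl⟩
  exact ⟨p, (chain_mono c hε hNT h).subset hp, rfl⟩

lemma Ms_mono {m n : ℕ} (h : m ≤ n) :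
    Ms (chain c hε hNT m).1.L ⊆ Ms (chain c hε hNT n).1.L := by
  rintro k ⟨p, hp, rfl⟩
  exact ⟨p, (chain_mono c hε hNT h).subset hp, rfl⟩

/-- every pool index on the ξ side is eventually matched -/
lemma total₁ (k : ℕ) (hk : k ∈ Pool ξ X NT) :
    ∃ n, k ∈ Mf (chain c hε hNT n).1.L := by
  by_contra hcon
  push_neg at hcon
  set A : ℕ → Set ℕ := fun n =>
    (Pool ξ X NT ∩ Set.Iic k) \ Mf (chain c hε hNT n).1.L with hA
  have hAfin : ∀ n, (A n).Finite :=
    fun n => (Set.finite_Iic k).subset (fun x hx => hx.1.2)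
  have hkA : ∀ n, k ∈ A n := fun n => ⟨⟨hk, le_refl k⟩, hcon n⟩
  have hstep : ∀ i, (A (2*(i+1))).ncard < (A (2*i)).ncard := by
    intro i
    have hne : (Pool ξ X NT \ Mf (chain c hε hNT (2*i)).1.L).Nonempty :=
      ⟨k, hk, hcon (2*i)⟩
    have hprog := ((chain_spec c hε hNT (2*i)).2.2.2.2.1)
      (by rw [chain_n]; omega) hne
    set m := sInf (Pool ξ X NT \ Mf (chain c hε hNT (2*i)).1.L) with hm
    have hmmem : m ∈ Pool ξ X NT \ Mf (chain c hε hNT (2*i)).1.L := Nat.sInf_mem hne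
    have hmk : m ≤ k := Nat.sInf_le ⟨hk, hcon (2*i)⟩
    have hmA : m ∈ A (2*i) := ⟨⟨hmmem.1, hmk⟩, hmmem.2⟩
    have hsub : A (2*(i+1)) ⊆ A (2*i) \ {m} := by
      rintro x ⟨hx1, hx2⟩
      refine ⟨⟨hx1, fun hxm => hx2 (Mf_mono c hε hNT (by omega) hxm)⟩, ?_⟩
      intro hxm
      rw [Set.mem_singleton_iff] at hxm
      subst hxm
      exact hx2 (Mf_mono c hε hNT (by omega) hprog)
    calc (A (2*(i+1))).ncard ≤ (A (2*i) \ {m}).ncard :=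
          Set.ncard_le_ncard hsub (hAfin _).diff
    _ < (A (2*i)).ncard := Set.ncard_diff_singleton_lt_of_mem hmA (hAfin _)
  have hdec : ∀ i, (A (2*i)).ncard + i ≤ (A 0).ncard := by
    intro i
    induction i with
    | zero => norm_num
    | succ i ih =>
      have := hstep i
      omega
  have h1 := hdec ((A 0).ncard + 1)
  have h2 := (Set.ncard_pos (hAfin (2*((A 0).ncard + 1)))).2 ⟨k, hkA _⟩
  omega

/-- every pool index on the ζ side is eventually matched -/
lemma total₂ (j : ℕ) (hj : j ∈ Pool ζ X NT) :
    ∃ n, j ∈ Ms (chain c hε hNT n).1.L := by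
  by_contra hcon
  push_neg at hcon
  set A : ℕ → Set ℕ := fun n =>
    (Pool ζ X NT ∩ Set.Iic j) \ Ms (chain c hε hNT n).1.L with hA
  have hAfin : ∀ n, (A n).Finite :=
    fun n => (Set.finite_Iic j).subset (fun x hx => hx.1.2)
  have hstep : ∀ i, (A (2*(i+1)+1)).ncard < (A (2*i+1)).ncard := by
    intro i
    have hne : (Pool ζ X NT \ Ms (chain c hε hNT (2*i+1)).1.L).Nonempty :=
      ⟨j, hj, hcon (2*i+1)⟩
    have hprog := ((chain_spec c hε hNT (2*i+1)).2.2.2.2.2)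
      (by rw [chain_n]; omega) hne
    set m := sInf (Pool ζ X NT \ Ms (chain c hε hNT (2*i+1)).1.L) with hm
    have hmmem : m ∈ Pool ζ X NT \ Ms (chain c hε hNT (2*i+1)).1.L := Nat.sInf_mem hne
    have hmk : m ≤ j := Nat.sInf_le ⟨hj, hcon (2*i+1)⟩
    have hmA : m ∈ A (2*i+1) := ⟨⟨hmmem.1, hmk⟩, hmmem.2⟩
    have hsub : A (2*(i+1)+1) ⊆ A (2*i+1) \ {m} := by
      rintro x ⟨hx1, hx2⟩
      refine ⟨⟨hx1, fun hxm => hx2 (Ms_mono c hε hNT (by omega) hxm)⟩, ?_⟩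
      intro hxm
      rw [Set.mem_singleton_iff] at hxm
      subst hxm
      exact hx2 (Ms_mono c hε hNT (by omega) hprog)
    calc (A (2*(i+1)+1)).ncard ≤ (A (2*i+1) \ {m}).ncard :=
          Set.ncard_le_ncard hsub (hAfin _).diff
    _ < (A (2*i+1)).ncard := Set.ncard_diff_singleton_lt_of_mem hmA (hAfin _)
  have hdec : ∀ i, (A (2*i+1)).ncard + i ≤ (A 1).ncard := by
    intro i
    induction i with
    | zero => norm_num
    | succ i ih =>
      have := hstep i
      omega
  have h1 := hdec ((A 1).ncard + 1)
  have hjA : ∀ n, j ∈ A n := fun n => ⟨⟨hj, le_refl j⟩, hcon n⟩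
  have h2 := (Set.ncard_pos (hAfin (2*((A 1).ncard + 1)+1))).2 ⟨j, hjA _⟩
  omega

/-- the set of all pairs ever matched -/
def PairsSet : Set (ℕ × ℕ × ℕ) := {p | ∃ n, p ∈ (chain c hε hNT n).1.L}

lemma pairs_common {p q : ℕ × ℕ × ℕ} (hp : p ∈ PairsSet c hε hNT)
    (hq : q ∈ PairsSet c hε hNT) :
    ∃ n, p ∈ (chain c hε hNT n).1.L ∧ q ∈ (chain c hε hNT n).1.L := by
  obtain ⟨m, hm⟩ := hp
  obtain ⟨n, hn⟩ := hq
  exact ⟨max m n, (chain_mono c hε hNT (le_max_left m n)).subset hm,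
    (chain_mono c hε hNT (le_max_right m n)).subset hn⟩

lemma uniq₁ {p q : ℕ × ℕ × ℕ} (hp : p ∈ PairsSet c hε hNT)
    (hq : q ∈ PairsSet c hε hNT) (h : p.1 = q.1) : p = q := by
  obtain ⟨n, hpn, hqn⟩ := pairs_common c hε hNT hp hq
  exact List.inj_on_of_nodup_map (chain c hε hNT n).2.ndk hpn hqn h

lemma uniq₂ {p q : ℕ × ℕ × ℕ} (hp : p ∈ PairsSet c hε hNT)
    (hq : q ∈ PairsSet c hε hNT) (h : p.2.1 = q.2.1) : p = q := by
  obtain ⟨n, hpn, hqn⟩ := pairs_common c hε hNT hp hq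
  exact List.inj_on_of_nodup_map (chain c hε hNT n).2.ndj hpn hqn h

lemma uniq_charge {p q : ℕ × ℕ × ℕ} (hp : p ∈ PairsSet c hε hNT)
    (hq : q ∈ PairsSet c hε hNT) (h : p.2.2 = q.2.2) : p = q := by
  obtain ⟨n, hpn, hqn⟩ := pairs_common c hε hNT hp hq
  have inv := (chain c hε hNT n).2
  rcases Nat.even_or_odd p.2.2 with hev | hod
  · exact inv.evnd p hpn q hqn h (by obtain ⟨t, ht⟩ := hev; omega)
  · rcases inv.link p hpn with h1 | ⟨z, hz⟩ | ⟨z, hz⟩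
    · exfalso; obtain ⟨t, ht⟩ := hod; omega
    · rcases inv.link q hqn with h1' | ⟨z', hz'⟩ | ⟨z', hz'⟩
      · exfalso; rw [← h] at h1'; obtain ⟨t, ht⟩ := hod; omega
      · have := inv.wndx _ hz _ hz' (by simpa using h)
        have hfst : p.1 = q.1 := by
          have := congrArg Prod.fst this
          simpa using this
        exact uniq₁ c hε hNT hp hq hfst
      · exact absurd (by simpa using h) (inv.wdisj _ hz _ hz')
    · rcases inv.link q hqn with h1' | ⟨z', hz'⟩ | ⟨z', hz'⟩
      · exfalso; rw [← h] at h1'; obtain ⟨t, ht⟩ := hod; omega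
      · exact absurd (by simpa using h.symm) (inv.wdisj _ hz' _ hz)
      · have := inv.wndz _ hz _ hz' (by simpa using h)
        have hfst : p.2.1 = q.2.1 := by
          have := congrArg Prod.fst this
          simpa using this
        exact uniq₂ c hε hNT hp hq hfst

end Chain

section Perm

variable {ξ ζ : ℕ → ℝ} {X : Set ℝ} {ε : ℝ}

/-- The key combinatorial lemma: existence of the permutation. -/
lemma key (c : Ctx ξ ζ X) (hε : 0 < ε) :
    ∃ π : Equiv.Perm ℕ, (∀ k, |ξ k - ζ (π k)| < ε) ∧
      Filter.Tendsto (fun k => ξ k - ζ (π k)) Filter.atTop (nhds 0) := by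
  classical
  set NT : ℝ → Prop := fun x => ∃ z, Thk ξ z ∧ Thk ζ z ∧ |x - z| < ε/4 with hNTdef
  have hNT : ∀ z y, Thk ξ z → Thk ζ z → |y - z| < ε/4 → NT y :=
    fun z y h1 h2 h3 => ⟨z, h1, h2, h3⟩
  set P₁ : Set ℕ := Pool ξ X NT with hP₁
  set P₂ : Set ℕ := Pool ζ X NT with hP₂
  set P : Set (ℕ × ℕ × ℕ) := PairsSet c hε hNT with hP
  have hmem : ∀ p ∈ P, p.1 ∈ P₁ ∧ p.2.1 ∈ P₂ := by
    rintro p ⟨n, hn⟩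
    exact (chain c hε hNT n).2.mem p hn
  have herr : ∀ p ∈ P, |ξ p.1 - ζ p.2.1| < 2 * τf ε p.2.2 := by
    rintro p ⟨n, hn⟩
    exact (chain c hε hNT n).2.err p hn
  have htot₁ : ∀ k ∈ P₁, ∃ p, p ∈ P ∧ p.1 = k := by
    intro k hk
    obtain ⟨n, p, hp, hpk⟩ := total₁ c hε hNT k hk
    exact ⟨p, ⟨n, hp⟩, hpk⟩
  have htot₂ : ∀ j ∈ P₂, ∃ p, p ∈ P ∧ p.2.1 = j := by
    intro j hj
    obtain ⟨n, p, hp, hpj⟩ := total₂ c hε hNT j hj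
    exact ⟨p, ⟨n, hp⟩, hpj⟩
  have hrig₁ : ∀ k, k ∉ P₁ → Rig ξ X (ξ k) := by
    intro k hk
    by_contra hr
    exact hk (Or.inl hr)
  have hrig₂ : ∀ j, j ∉ P₂ → Rig ζ X (ζ j) := by
    intro j hj
    by_contra hr
    exact hj (Or.inl hr)
  -- exact-part sets
  set E₁ : ℝ → Set ℕ := fun x => Fib ξ x \ P₁ with hE₁
  set E₂ : ℝ → Set ℕ := fun x => Fib ζ x \ P₂ with hE₂
  have hNE : ∀ x, Nonempty (↥(E₁ x) ≃ ↥(E₂ x)) := by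
    intro x
    by_cases hr : Rig ξ X x
    · -- rigid: equal finite cardinalities
      have hr' : Rig ζ X x := c.rig_mirror hr
      have hfin₁ : (Fib ξ x).Finite := hr.2.2
      have hfin₂ : (Fib ζ x).Finite := hr'.2.2
      have hmk : Cardinal.mk (Fib ξ x) = Cardinal.mk (Fib ζ x) := c.iso x hr.1 hr.2.1
      obtain ⟨φ⟩ := Cardinal.eq.1 hmk
      have hfibcard : (Fib ξ x).ncard = (Fib ζ x).ncard := by
        rw [← Nat.card_coe_set_eq, ← Nat.card_coe_set_eq]
        exact Nat.card_congr φ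
      have hEcard : (E₁ x).ncard = (E₂ x).ncard := by
        by_cases hnt : NT x
        · have he₁ : E₁ x = Fib ξ x \ {don ξ x} := by
            ext k
            simp only [hE₁, Set.mem_diff, Set.mem_singleton_iff]
            constructor
            · rintro ⟨hkf, hkp⟩
              refine ⟨hkf, fun hd => hkp (Or.inr ⟨?_, ?_⟩)⟩
              · rw [show ξ k = x from hkf]; exact hnt
              · rw [show ξ k = x from hkf]; exact hd
            · rintro ⟨hkf, hkd⟩
              refine ⟨hkf, fun hkp => ?_⟩
              rcases hkp with hnr | ⟨_, hd⟩
              · exact hnr (by rw [show ξ k = x from hkf]; exact hr)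
              · exact hkd (by rw [← show ξ k = x from hkf]; exact hd)
          have he₂ : E₂ x = Fib ζ x \ {don ζ x} := by
            ext j
            simp only [hE₂, Set.mem_diff, Set.mem_singleton_iff]
            constructor
            · rintro ⟨hkf, hkp⟩
              refine ⟨hkf, fun hd => hkp (Or.inr ⟨?_, ?_⟩)⟩
              · rw [show ζ j = x from hkf]; exact hnt
              · rw [show ζ j = x from hkf]; exact hd
            · rintro ⟨hkf, hkd⟩
              refine ⟨hkf, fun hkp => ?_⟩
              rcases hkp with hnr | ⟨_, hd⟩
              · exact hnr (by rw [show ζ j = x from hkf]; exact hr')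
              · exact hkd (by rw [← show ζ j = x from hkf]; exact hd)
          rw [he₁, he₂]
          rcases Set.eq_empty_or_nonempty (Fib ξ x) with hem | hnem
          · have hem' : Fib ζ x = ∅ := by
              by_contra hne'
              obtain ⟨j, hj⟩ := Set.nonempty_iff_ne_empty.2 hne'
              have := fib_nonempty_mirror hmk.symm ⟨j, hj⟩
              rw [hem] at this
              exact Set.not_nonempty_empty this
            rw [hem, hem']
            simp
          · have hnem' : (Fib ζ x).Nonempty := fib_nonempty_mirror hmk hnem
            rw [Set.ncard_diff_singleton_of_mem
                (show don ξ x ∈ Fib ξ x from Nat.sInf_mem hnem),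
              Set.ncard_diff_singleton_of_mem
                (show don ζ x ∈ Fib ζ x from Nat.sInf_mem hnem'), hfibcard]
        · have he₁ : E₁ x = Fib ξ x := by
            ext k
            simp only [hE₁, Set.mem_diff]
            refine ⟨fun h => h.1, fun hkf => ⟨hkf, fun hkp => ?_⟩⟩
            rcases hkp with hnr | ⟨hnt', _⟩
            · exact hnr (by rw [show ξ k = x from hkf]; exact hr)
            · exact hnt (by rw [← show ξ k = x from hkf]; exact hnt')
          have he₂ : E₂ x = Fib ζ x := by
            ext j
            simp only [hE₂, Set.mem_diff]
            refine ⟨fun h => h.1, fun hkf => ⟨hkf, fun hkp => ?_⟩⟩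
            rcases hkp with hnr | ⟨hnt', _⟩
            · exact hnr (by rw [show ζ j = x from hkf]; exact c.rig_mirror hr)
            · exact hnt (by rw [← show ζ j = x from hkf]; exact hnt')
          rw [he₁, he₂, hfibcard]
      have hfinE₁ : (E₁ x).Finite := hfin₁.subset (fun k hk => hk.1)
      have hfinE₂ : (E₂ x).Finite := hfin₂.subset (fun k hk => hk.1)
      have hcards : hfinE₁.toFinset.card = hfinE₂.toFinset.card := by
        rw [← Set.ncard_eq_toFinset_card _ hfinE₁, ← Set.ncard_eq_toFinset_card _ hfinE₂,
          hEcard]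
      refine ⟨(Equiv.subtypeEquivRight fun k => ?_).trans
        ((Finset.equivOfCardEq hcards).trans (Equiv.subtypeEquivRight fun k => ?_))⟩
      · exact (hfinE₁.mem_toFinset).symm
      · exact hfinE₂.mem_toFinset
    · -- non-rigid: both sides empty
      have he₁ : E₁ x = ∅ := by
        ext k
        simp only [hE₁, Set.mem_diff, Set.mem_empty_iff_false, iff_false]
        rintro ⟨hkf, hkp⟩
        exact hkp (Or.inl (by rw [show ξ k = x from hkf]; exact hr))
      have he₂ : E₂ x = ∅ := by
        ext j
        simp only [hE₂, Set.mem_diff, Set.mem_empty_iff_false, iff_false]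
        rintro ⟨hkf, hkp⟩
        exact hkp (Or.inl (fun hrz => hr (by
          rw [← show ζ j = x from hkf]
          exact c.symm.rig_mirror hrz)))
      rw [he₁, he₂]
      exact ⟨Equiv.refl _⟩
  set eqv : ∀ x, ↥(E₁ x) ≃ ↥(E₂ x) := fun x => (hNE x).some with heqv
  -- the forward and backward maps
  set f : ℕ → ℕ := fun k =>
    if hk : k ∈ P₁ then ((htot₁ k hk).choose).2.1
    else (eqv (ξ k) ⟨k, rfl, hk⟩ : ℕ) with hf
  set g : ℕ → ℕ := fun j =>
    if hj : j ∈ P₂ then ((htot₂ j hj).choose).1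
    else ((eqv (ζ j)).symm ⟨j, rfl, hj⟩ : ℕ) with hg
  -- membership facts
  have hf_pool : ∀ k (hk : k ∈ P₁), f k = ((htot₁ k hk).choose).2.1 := by
    intro k hk
    simp only [hf, dif_pos hk]
  have hf_ex : ∀ k (hk : k ∉ P₁), f k = (eqv (ξ k) ⟨k, rfl, hk⟩ : ℕ) := by
    intro k hk
    simp only [hf, dif_neg hk]
  have hg_pool : ∀ j (hj : j ∈ P₂), g j = ((htot₂ j hj).choose).1 := by
    intro j hj
    simp only [hg, dif_pos hj]
  have hg_ex : ∀ j (hj : j ∉ P₂), g j = ((eqv (ζ j)).symm ⟨j, rfl, hj⟩ : ℕ) := by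
    intro j hj
    simp only [hg, dif_neg hj]
  -- helper: the exact equivalence is independent of representation of x
  have heqv_indep : ∀ (x x' : ℝ), x = x' → ∀ (j : ℕ) (h1 : j ∈ E₂ x) (h2 : j ∈ E₂ x'),
      ((eqv x).symm ⟨j, h1⟩ : ℕ) = ((eqv x').symm ⟨j, h2⟩ : ℕ) := by
    rintro x x' rfl j h1 h2
    rfl
  have heqv_indep' : ∀ (x x' : ℝ), x = x' → ∀ (k : ℕ) (h1 : k ∈ E₁ x) (h2 : k ∈ E₁ x'),
      ((eqv x) ⟨k, h1⟩ : ℕ) = ((eqv x') ⟨k, h2⟩ : ℕ) := by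
    rintro x x' rfl k h1 h2
    rfl
  have hgf : ∀ k, g (f k) = k := by
    intro k
    by_cases hk : k ∈ P₁
    · have hp := (htot₁ k hk).choose_spec
      set p := (htot₁ k hk).choose with hpd
      have hjP : p.2.1 ∈ P₂ := (hmem p hp.1).2
      rw [hf_pool k hk, hg_pool _ hjP]
      have hq := (htot₂ p.2.1 hjP).choose_spec
      have : (htot₂ p.2.1 hjP).choose = p := uniq₂ c hε hNT hq.1 hp.1 hq.2
      rw [this, hp.2]
    · rw [hf_ex k hk]
      set u : ↥(E₂ (ξ k)) := eqv (ξ k) ⟨k, rfl, hk⟩ with hu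
      have hu2 := u.2
      have huz : ζ (u : ℕ) = ξ k := hu2.1
      have huP : (u : ℕ) ∉ P₂ := hu2.2
      rw [hg_ex _ huP]
      refine (heqv_indep (ζ (u:ℕ)) (ξ k) huz (u:ℕ) ⟨rfl, huP⟩ u.2).trans ?_
      have : (⟨(u : ℕ), u.2⟩ : ↥(E₂ (ξ k))) = u := Subtype.ext rfl
      rw [this, Equiv.symm_apply_apply]
  have hfg : ∀ j, f (g j) = j := by
    intro j
    by_cases hj : j ∈ P₂
    · have hp := (htot₂ j hj).choose_spec
      set p := (htot₂ j hj).choose with hpd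
      have hkP : p.1 ∈ P₁ := (hmem p hp.1).1
      rw [hg_pool j hj, hf_pool _ hkP]
      have hq := (htot₁ p.1 hkP).choose_spec
      have : (htot₁ p.1 hkP).choose = p := uniq₁ c hε hNT hq.1 hp.1 hq.2
      rw [this, hp.2]
    · rw [hg_ex j hj]
      set u : ↥(E₁ (ζ j)) := (eqv (ζ j)).symm ⟨j, rfl, hj⟩ with hu
      have hu2 := u.2
      have huz : ξ (u : ℕ) = ζ j := hu2.1
      have huP : (u : ℕ) ∉ P₁ := hu2.2
      rw [hf_ex _ huP]
      refine (heqv_indep' (ξ (u:ℕ)) (ζ j) huz (u:ℕ) ⟨rfl, huP⟩ u.2).trans ?_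
      have : (⟨(u : ℕ), u.2⟩ : ↥(E₁ (ζ j))) = u := Subtype.ext rfl
      rw [this, Equiv.apply_symm_apply]
  set π : Equiv.Perm ℕ := ⟨f, g, hgf, hfg⟩ with hπ
  have hexact_val : ∀ k (hk : k ∉ P₁), ζ (f k) = ξ k := by
    intro k hk
    rw [hf_ex k hk]
    exact (eqv (ξ k) ⟨k, rfl, hk⟩).2.1
  have hpool_err : ∀ k (hk : k ∈ P₁), ∃ p, p ∈ P ∧ p.1 = k ∧ p.2.1 = f k := by
    intro k hk
    have hp := (htot₁ k hk).choose_spec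
    exact ⟨(htot₁ k hk).choose, hp.1, hp.2, (hf_pool k hk).symm⟩
  have hbound : ∀ k, |ξ k - ζ (π k)| < ε := by
    intro k
    by_cases hk : k ∈ P₁
    · obtain ⟨p, hpP, hp1, hp2⟩ := hpool_err k hk
      have h1 := herr p hpP
      rw [hp1, hp2] at h1
      calc |ξ k - ζ (π k)| = |ξ k - ζ (f k)| := rfl
      _ < 2 * τf ε p.2.2 := h1
      _ ≤ 2 * (ε/8) := by nlinarith [τf_le hε p.2.2]
      _ < ε := by linarith
    · have : ζ (π k) = ξ k := hexact_val k hk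
      rw [show ξ k - ζ (π k) = 0 by rw [this]; ring]
      simpa using hε
  refine ⟨π, hbound, ?_⟩
  -- Tendsto via cofinite
  rw [← Nat.cofinite_eq_atTop]
  rw [Metric.tendsto_nhds]
  intro δ hδ
  rw [Filter.eventually_cofinite]
  have hCfin : {cc : ℕ | δ ≤ 2 * τf ε cc}.Finite := by
    have hev : ∀ᶠ cc in Filter.atTop, τf ε cc < δ/2 :=
      Filter.Tendsto.eventually_lt_const (by linarith) (τf_tendsto hε)
    obtain ⟨N, hN⟩ := Filter.eventually_atTop.1 hev
    refine (Set.finite_Iio N).subset fun cc hcc => ?_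
    rw [Set.mem_Iio]
    by_contra hge
    push_neg at hge
    have h3 := hN cc hge
    have h4 : δ ≤ 2 * τf ε cc := hcc
    linarith
  have hBfin : {p | p ∈ P ∧ δ ≤ 2 * τf ε p.2.2}.Finite := by
    refine Set.Finite.of_finite_image (f := fun p : ℕ × ℕ × ℕ => p.2.2)
      (hCfin.subset ?_) ?_
    · rintro cc ⟨p, ⟨hpP, hpd⟩, rfl⟩
      exact hpd
    · rintro p ⟨hpP, _⟩ q ⟨hqP, _⟩ hpq
      exact uniq_charge c hε hNT hpP hqP hpq
  refine (hBfin.image (fun p => p.1)).subset ?_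
  rintro k hk
  simp only [Set.mem_setOf_eq, not_lt] at hk
  by_cases hkP : k ∈ P₁
  · obtain ⟨p, hpP, hp1, hp2⟩ := hpool_err k hkP
    refine ⟨p, ⟨hpP, ?_⟩, hp1⟩
    have h1 := herr p hpP
    have h2 : dist (ξ k - ζ (π k)) 0 = |ξ k - ζ (f k)| := by
      rw [Real.dist_eq, sub_zero]
      rfl
    rw [h2] at hk
    rw [hp1, hp2] at h1
    linarith
  · exfalso
    have : ζ (π k) = ξ k := hexact_val k hkP
    rw [Real.dist_eq, sub_zero, show ξ k - ζ (π k) = 0 by rw [this]; ring] at hk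
    simp at hk
    linarith

end Perm

end S13

/-- diagonal case of Weyl–von Neumann–Berg. Let `H₁`, `H₂` be complex
Hilbert spaces with Hilbert bases `(v k)`, `(w k)`, and let `(ξ k)`, `(ζ k)` be real
sequences whose ranges have the same closure `X`, each isolated point of `X` being
repeated the same number of times in both sequences.  Then for every `ε > 0` there are a
permutation `π` of the indices and a unitary `U : H₁ → H₂` with `U (v k) = w (π k)`,
`|ξ k - ζ (π k)| < ε` for all `k`, and `ξ k - ζ (π k) → 0`. -/
theorem stmt13 {H₁ H₂ : Type*}
    [NormedAddCommGroup H₁] [InnerProductSpace ℂ H₁] [CompleteSpace H₁]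
    [NormedAddCommGroup H₂] [InnerProductSpace ℂ H₂] [CompleteSpace H₂]
    (v : ℕ → H₁) (w : ℕ → H₂)
    (hv : Orthonormal ℂ v) (hw : Orthonormal ℂ w)
    (hvtot : (Submodule.span ℂ (Set.range v)).topologicalClosure = ⊤)
    (hwtot : (Submodule.span ℂ (Set.range w)).topologicalClosure = ⊤)
    (ξ ζ : ℕ → ℝ) (X : Set ℝ)
    (hξ : closure (Set.range ξ) = X) (hζ : closure (Set.range ζ) = X)
    (hiso : ∀ x ∈ X, (∃ ε > (0 : ℝ), X ∩ Metric.ball x ε = {x}) →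
      Cardinal.mk {k : ℕ | ξ k = x} = Cardinal.mk {k : ℕ | ζ k = x}) :
    ∀ ε : ℝ, 0 < ε → ∃ (π : Equiv.Perm ℕ) (U : H₁ ≃ₗᵢ[ℂ] H₂),
      (∀ k, U (v k) = w (π k)) ∧ (∀ k, |ξ k - ζ (π k)| < ε) ∧
      Filter.Tendsto (fun k => ξ k - ζ (π k)) Filter.atTop (nhds 0) := by
  intro ε hε
  have c : S13.Ctx ξ ζ X := ⟨hξ, hζ, fun x hx hi => hiso x hx hi⟩
  obtain ⟨π, hb, ht⟩ := S13.key c hε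
  have hv' : ⊤ ≤ (Submodule.span ℂ (Set.range v)).topologicalClosure := by
    rw [hvtot]
  have hwπ : Orthonormal ℂ (w ∘ π) := hw.comp π π.injective
  have hw' : ⊤ ≤ (Submodule.span ℂ (Set.range (w ∘ π))).topologicalClosure := by
    rw [Set.range_comp, Equiv.range_eq_univ, Set.image_univ, hwtot]
  refine ⟨π, (HilbertBasis.mk hv hv').repr.trans (HilbertBasis.mk hwπ hw').repr.symm,
    ?_, hb, ht⟩
  intro k
  have h1 := congrFun (HilbertBasis.coe_mk hv hv') k
  have h2 := congrFun (HilbertBasis.coe_mk hwπ hw') k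
  show (HilbertBasis.mk hwπ hw').repr.symm ((HilbertBasis.mk hv hv').repr (v k)) = w (π k)
  rw [← h1, HilbertBasis.repr_self, HilbertBasis.repr_symm_single, h2]
  rfl
end

section
/- Let μ and ν be finite Borel measures on ℝ. Then μ = ν if and only if there exists a unitary operator V : L²(ℝ, μ) → L²(ℝ, ν) such that V maps the constant function 1 to the constant function 1 and V(g·f) = g·(Vf) for every bounded Borel function g : ℝ → ℂ and every f ∈ L²(ℝ, μ). -/
open MeasureTheory ENNReal

/-- Two finite Borel measures `μ`, `ν` on `ℝ` are equal if and only if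
there exists a unitary `V : L²(ℝ, μ) → L²(ℝ, ν)` sending the constant function `1` to the
constant function `1` and commuting with multiplication by every bounded Borel function. -/
theorem stmt14 (μ ν : Measure ℝ) [IsFiniteMeasure μ] [IsFiniteMeasure ν] :
    μ = ν ↔
      ∃ V : Lp ℂ 2 μ ≃ₗᵢ[ℂ] Lp ℂ 2 ν,
        (∀ (h₁ : MemLp (fun _ : ℝ => (1 : ℂ)) 2 μ)
           (h₂ : MemLp (fun _ : ℝ => (1 : ℂ)) 2 ν),
            V (h₁.toLp _) = h₂.toLp _) ∧
        (∀ g : ℝ → ℂ, Measurable g → (∃ C : ℝ, ∀ x, ‖g x‖ ≤ C) →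
          ∀ f : Lp ℂ 2 μ,
            ∀ (h₁ : MemLp (fun x => g x * f x) 2 μ)
              (h₂ : MemLp (fun x => g x * (V f : ℝ → ℂ) x) 2 ν),
              V (h₁.toLp _) = h₂.toLp _) := by
  constructor
  · rintro rfl
    exact ⟨LinearIsometryEquiv.refl ℂ _, fun h₁ h₂ => rfl, fun g hg hb f h₁ h₂ => rfl⟩
  · rintro ⟨V, hV1, hVmul⟩
    have h1μ : MemLp (fun _ : ℝ => (1:ℂ)) 2 μ := memLp_const 1
    have h1ν : MemLp (fun _ : ℝ => (1:ℂ)) 2 ν := memLp_const 1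
    ext s hs
    set g : ℝ → ℂ := s.indicator fun _ => 1 with hgdef
    have hgmeas : Measurable g := measurable_const.indicator hs
    have hgbd : ∀ x, ‖g x‖ ≤ 1 := by
      intro x; by_cases hx : x ∈ s <;> simp [g, hx]
    have hgμ : MemLp g 2 μ := MemLp.of_bound hgmeas.aestronglyMeasurable 1 (ae_of_all _ hgbd)
    have hgν : MemLp g 2 ν := MemLp.of_bound hgmeas.aestronglyMeasurable 1 (ae_of_all _ hgbd)
    have hcoe : (h1μ.toLp _ : ℝ → ℂ) =ᵐ[μ] fun _ => 1 := h1μ.coeFn_toLp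
    have heq₁ : g =ᵐ[μ] fun x => g x * (h1μ.toLp _ : ℝ → ℂ) x := by
      filter_upwards [hcoe] with x hx; rw [hx, mul_one]
    have h₁' : MemLp (fun x => g x * (h1μ.toLp _ : ℝ → ℂ) x) 2 μ := hgμ.ae_eq heq₁
    have hVone := hV1 h1μ h1ν
    have hcoeν : (V (h1μ.toLp _) : ℝ → ℂ) =ᵐ[ν] fun _ => 1 := by
      rw [hVone]; exact h1ν.coeFn_toLp
    have heq₂ : g =ᵐ[ν] fun x => g x * (V (h1μ.toLp _) : ℝ → ℂ) x := by
      filter_upwards [hcoeν] with x hx; rw [hx, mul_one]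
    have h₂' : MemLp (fun x => g x * (V (h1μ.toLp _) : ℝ → ℂ) x) 2 ν := hgν.ae_eq heq₂
    have hkey := hVmul g hgmeas ⟨1, hgbd⟩ (h1μ.toLp _) h₁' h₂'
    have hnorm : ‖h₁'.toLp _‖ = ‖h₂'.toLp _‖ := by
      rw [← hkey]; exact (LinearIsometryEquiv.norm_map V _).symm
    rw [Lp.norm_toLp, Lp.norm_toLp, ← eLpNorm_congr_ae heq₁, ← eLpNorm_congr_ae heq₂] at hnorm
    have hEL : eLpNorm g 2 μ = eLpNorm g 2 ν := by
      refine (ENNReal.toReal_eq_toReal_iff' hgμ.eLpNorm_ne_top hgν.eLpNorm_ne_top).mp hnorm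
    rw [hgdef, eLpNorm_indicator_const hs (by norm_num) (by norm_num),
        eLpNorm_indicator_const hs (by norm_num) (by norm_num)] at hEL
    simp only [enorm_one, nnnorm_one, ENNReal.coe_one, one_mul] at hEL
    have h2 : (1 / (2:ℝ≥0∞).toReal) ≠ 0 := by norm_num
    exact ENNReal.rpow_left_injective h2 hEL
end

section
/- Let μ and ν be finite Borel measures on ℝ. Then μ and ν are mutually singular if and only if for every Borel measure ρ on ℝ and all f, g ∈ L²(ℝ, ρ) satisfying ∫_E |f|² dρ = μ(E) and ∫_E |g|² dρ = ν(E) for every Borel set E, one has ⟨f, g⟩_{L²(ρ)} = 0. -/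
open MeasureTheory

/-- Finite Borel measures `μ`, `ν` on `ℝ` are mutually singular if and
only if for every Borel measure `ρ` on `ℝ` and all `f, g ∈ L²(ℝ, ρ)` whose spectral
measures are `μ` and `ν` respectively (`∫_E |f|² dρ = μ E` and `∫_E |g|² dρ = ν E` for
every Borel set `E`), the inner product `⟨f, g⟩ = ∫ f ⬝ conj g dρ` vanishes. -/
theorem stmt15 (μ ν : Measure ℝ) [IsFiniteMeasure μ] [IsFiniteMeasure ν] :
    μ.MutuallySingular ν ↔
      ∀ (ρ : Measure ℝ) (f g : ℝ → ℂ), MemLp f 2 ρ → MemLp g 2 ρ →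
        (∀ E : Set ℝ, MeasurableSet E →
          (∫⁻ x in E, (‖f x‖₊ : ENNReal) ^ 2 ∂ρ) = μ E) →
        (∀ E : Set ℝ, MeasurableSet E →
          (∫⁻ x in E, (‖g x‖₊ : ENNReal) ^ 2 ∂ρ) = ν E) →
        (∫ x, f x * (starRingEnd ℂ) (g x) ∂ρ) = 0 := by
  constructor
  · rintro ⟨s, hs, hμs, hνs⟩ ρ f g hf hg hfμ hgν
    -- f = 0 a.e. on s, g = 0 a.e. on sᶜ
    have hf0 : ∀ᵐ x ∂ρ.restrict s, f x = 0 := by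
      have h0 : (∫⁻ x in s, (‖f x‖₊ : ENNReal) ^ 2 ∂ρ) = 0 := by rw [hfμ s hs, hμs]
      have hm : AEMeasurable (fun x => (‖f x‖₊ : ENNReal) ^ 2) (ρ.restrict s) :=
        (hf.1.restrict.enorm).pow_const 2
      have := (lintegral_eq_zero_iff' hm).mp h0
      filter_upwards [this] with x hx
      simpa using hx
    have hg0 : ∀ᵐ x ∂ρ.restrict sᶜ, g x = 0 := by
      have h0 : (∫⁻ x in sᶜ, (‖g x‖₊ : ENNReal) ^ 2 ∂ρ) = 0 := by rw [hgν sᶜ hs.compl, hνs]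
      have hm : AEMeasurable (fun x => (‖g x‖₊ : ENNReal) ^ 2) (ρ.restrict sᶜ) :=
        (hg.1.restrict.enorm).pow_const 2
      have := (lintegral_eq_zero_iff' hm).mp h0
      filter_upwards [this] with x hx
      simpa using hx
    have hf0' : ∀ᵐ x ∂ρ, x ∈ s → f x = 0 := (ae_restrict_iff' hs).mp hf0
    have hg0' : ∀ᵐ x ∂ρ, x ∈ sᶜ → g x = 0 := (ae_restrict_iff' hs.compl).mp hg0
    have : ∀ᵐ x ∂ρ, f x * (starRingEnd ℂ) (g x) = 0 := by
      filter_upwards [hf0', hg0'] with x h1 h2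
      by_cases hx : x ∈ s
      · rw [h1 hx, zero_mul]
      · rw [h2 hx, map_zero, mul_zero]
    rw [integral_congr_ae this, integral_zero]
  · intro H
    set ρ : Measure ℝ := μ + ν with hρ
    have hμρ : μ ≪ ρ := Measure.AbsolutelyContinuous.mk fun t _ ht => by
      simp only [hρ, Measure.coe_add, Pi.add_apply, add_eq_zero] at ht
      exact ht.1
    have hνρ : ν ≪ ρ := Measure.AbsolutelyContinuous.mk fun t _ ht => by
      simp only [hρ, Measure.coe_add, Pi.add_apply, add_eq_zero] at ht
      exact ht.2
    set a : ℝ → ENNReal := μ.rnDeriv ρ with ha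
    set b : ℝ → ENNReal := ν.rnDeriv ρ with hb
    have ham : Measurable a := Measure.measurable_rnDeriv _ _
    have hbm : Measurable b := Measure.measurable_rnDeriv _ _
    have halt : ∀ᵐ x ∂ρ, a x < ⊤ := Measure.rnDeriv_lt_top _ _
    have hblt : ∀ᵐ x ∂ρ, b x < ⊤ := Measure.rnDeriv_lt_top _ _
    set f : ℝ → ℂ := fun x => ((a x).toReal.sqrt : ℂ) with hf
    set g : ℝ → ℂ := fun x => ((b x).toReal.sqrt : ℂ) with hg
    have hfm : Measurable f := Complex.measurable_ofReal.comp
      (ham.ennreal_toReal.sqrt)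
    have hgm : Measurable g := Complex.measurable_ofReal.comp
      (hbm.ennreal_toReal.sqrt)
    have hfsq : ∀ x, ‖f x‖ ^ 2 = (a x).toReal := by
      intro x
      rw [hf]
      simp only [Complex.norm_real, Real.norm_eq_abs, abs_of_nonneg (Real.sqrt_nonneg _)]
      exact Real.sq_sqrt ENNReal.toReal_nonneg
    have hgsq : ∀ x, ‖g x‖ ^ 2 = (b x).toReal := by
      intro x
      rw [hg]
      simp only [Complex.norm_real, Real.norm_eq_abs, abs_of_nonneg (Real.sqrt_nonneg _)]
      exact Real.sq_sqrt ENNReal.toReal_nonneg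
    have hfa : ∀ᵐ x ∂ρ, ((‖f x‖₊ : ENNReal)) ^ 2 = a x := by
      filter_upwards [halt] with x hx
      have : ((‖f x‖₊ : ENNReal)) ^ 2 = ENNReal.ofReal (‖f x‖ ^ 2) := by
        rw [← enorm_eq_nnnorm, ← ofReal_norm, ← ENNReal.ofReal_pow (norm_nonneg _)]
      rw [this, hfsq x, ENNReal.ofReal_toReal hx.ne]
    have hgb : ∀ᵐ x ∂ρ, ((‖g x‖₊ : ENNReal)) ^ 2 = b x := by
      filter_upwards [hblt] with x hx
      have : ((‖g x‖₊ : ENNReal)) ^ 2 = ENNReal.ofReal (‖g x‖ ^ 2) := by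
        rw [← enorm_eq_nnnorm, ← ofReal_norm, ← ENNReal.ofReal_pow (norm_nonneg _)]
      rw [this, hgsq x, ENNReal.ofReal_toReal hx.ne]
    have hfμ : ∀ E : Set ℝ, MeasurableSet E →
        (∫⁻ x in E, (‖f x‖₊ : ENNReal) ^ 2 ∂ρ) = μ E := by
      intro E hE
      rw [setLIntegral_congr_fun_ae hE (by filter_upwards [hfa] with x hx _ using hx)]
      exact Measure.setLIntegral_rnDeriv hμρ E
    have hgν : ∀ E : Set ℝ, MeasurableSet E →
        (∫⁻ x in E, (‖g x‖₊ : ENNReal) ^ 2 ∂ρ) = ν E := by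
      intro E hE
      rw [setLIntegral_congr_fun_ae hE (by filter_upwards [hgb] with x hx _ using hx)]
      exact Measure.setLIntegral_rnDeriv hνρ E
    have hia : Integrable (fun x => (a x).toReal) ρ := Measure.integrable_toReal_rnDeriv
    have hib : Integrable (fun x => (b x).toReal) ρ := Measure.integrable_toReal_rnDeriv
    have hfL2 : MemLp f 2 ρ := by
      rw [memLp_two_iff_integrable_sq_norm hfm.aestronglyMeasurable]
      exact hia.congr (Filter.Eventually.of_forall fun x => (hfsq x).symm)
    have hgL2 : MemLp g 2 ρ := by
      rw [memLp_two_iff_integrable_sq_norm hgm.aestronglyMeasurable]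
      exact hib.congr (Filter.Eventually.of_forall fun x => (hgsq x).symm)
    have hzero := H ρ f g hfL2 hgL2 hfμ hgν
    -- the integrand is the coercion of a nonneg real function
    set h : ℝ → ℝ := fun x => (a x).toReal.sqrt * (b x).toReal.sqrt with hh
    have hmh : Measurable h := (ham.ennreal_toReal.sqrt).mul (hbm.ennreal_toReal.sqrt)
    have hnn : 0 ≤ h := fun x => mul_nonneg (Real.sqrt_nonneg _) (Real.sqrt_nonneg _)
    have hih : Integrable h ρ := by
      refine (hia.add hib).mono hmh.aestronglyMeasurable ?_
      refine Filter.Eventually.of_forall fun x => ?_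
      rw [Real.norm_eq_abs, abs_of_nonneg (hnn x), Real.norm_eq_abs]
      have h2 := two_mul_le_add_sq ((a x).toReal.sqrt) ((b x).toReal.sqrt)
      rw [Real.sq_sqrt ENNReal.toReal_nonneg, Real.sq_sqrt ENNReal.toReal_nonneg] at h2
      have h1 : h x ≤ ((a x).toReal + (b x).toReal) := by
        simp only [hh]
        nlinarith [Real.sqrt_nonneg (a x).toReal, Real.sqrt_nonneg (b x).toReal]
      exact h1.trans (le_abs_self _)
    have hcne : (∫ x, h x ∂ρ) = 0 := by
      have : (fun x => f x * (starRingEnd ℂ) (g x)) = fun x => ((h x : ℂ)) := by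
        funext x
        simp [hf, hg, hh, Complex.conj_ofReal, Complex.ofReal_mul]
      rw [this] at hzero
      have h2 : (∫ x, ((h x : ℝ) : ℂ) ∂ρ) = ((∫ x, h x ∂ρ : ℝ) : ℂ) := integral_ofReal
      rw [h2] at hzero
      exact_mod_cast hzero
    have hae : ∀ᵐ x ∂ρ, h x = 0 := by
      have := (integral_eq_zero_iff_of_nonneg hnn hih).mp hcne
      filter_upwards [this] with x hx
      simpa using hx
    -- deduce a.e. a x = 0 ∨ b x = 0
    have hab : ∀ᵐ x ∂ρ, a x = 0 ∨ b x = 0 := by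
      filter_upwards [hae, halt, hblt] with x hx hax hbx
      rcases mul_eq_zero.mp hx with h1 | h1
      · left
        have h0 : (a x).toReal = 0 :=
          le_antisymm (Real.sqrt_eq_zero'.mp h1) ENNReal.toReal_nonneg
        exact ((ENNReal.toReal_eq_zero_iff _).mp h0).resolve_right hax.ne
      · right
        have h0 : (b x).toReal = 0 :=
          le_antisymm (Real.sqrt_eq_zero'.mp h1) ENNReal.toReal_nonneg
        exact ((ENNReal.toReal_eq_zero_iff _).mp h0).resolve_right hbx.ne
    have hsm : MeasurableSet {x : ℝ | a x = 0} := ham (measurableSet_singleton 0)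
    refine ⟨{x : ℝ | a x = 0}, hsm, ?_, ?_⟩
    · have key : μ {x : ℝ | a x = 0} = ∫⁻ x in {x : ℝ | a x = 0}, a x ∂ρ :=
        (Measure.setLIntegral_rnDeriv hμρ _).symm
      rw [key, setLIntegral_congr_fun_ae hsm
        (Filter.Eventually.of_forall fun x (hx : a x = 0) => hx), lintegral_zero]
    · have key : ν {x : ℝ | a x = 0}ᶜ = ∫⁻ x in {x : ℝ | a x = 0}ᶜ, b x ∂ρ :=
        (Measure.setLIntegral_rnDeriv hνρ _).symm
      have hb0 : b =ᵐ[ρ.restrict {x : ℝ | a x = 0}ᶜ] fun _ => (0 : ENNReal) := by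
        rw [Filter.EventuallyEq, ae_restrict_iff' hsm.compl]
        filter_upwards [hab] with x hx hxc
        exact hx.resolve_left hxc
      rw [key, lintegral_congr_ae hb0, lintegral_zero]
end
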